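/- (Counterembedding) Let 𝔄 be an assignment structure, Ω a valuation (independent of the control variable ℓ), φ an Lμ_𝒱-formula, ϑ a dictionary compatible with φ, and D ⊆ 𝒮 such that for every X ∈ 𝒱̄ with ϑ(X) = 1 one has Ω⟦ℓ:=c_X⟧(D) = Ω(X). Then the μ-calculus semantics of φ equals the game-logic semantics of its translated game applied to D: Ω⟦φ⟧_μ = Ω⟦φ^ϑ⟧(D). -/

import Mathlib

open FirstOrder Set

namespace GLMu

/-! ## Barred propositional variables -/

/-- Barred propositional variables: `Sum.inl X` is `X`, `Sum.inr X` is `X̄`. -/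
def bar {V : Type*} : V ⊕ V → V ⊕ V := Sum.elim Sum.inr Sum.inl

def unbar {V : Type*} : V ⊕ V → V := Sum.elim id id

/-! ## First-order literals -/

/-- First-order literals with equality: atomic formulas and their negations. -/
inductive Lit (L : Language) (𝒳 : Type*) where
  | eq (t₁ t₂ : L.Term 𝒳)
  | ne (t₁ t₂ : L.Term 𝒳)
  | rel {n : ℕ} (R : L.Relations n) (ts : Fin n → L.Term 𝒳)
  | nrel {n : ℕ} (R : L.Relations n) (ts : Fin n → L.Term 𝒳)

namespace Lit

variable {L : Language} {𝒳 : Type*}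

/-- Negation of a literal. -/
def neg : Lit L 𝒳 → Lit L 𝒳
  | .eq t₁ t₂ => .ne t₁ t₂
  | .ne t₁ t₂ => .eq t₁ t₂
  | .rel R ts => .nrel R ts
  | .nrel R ts => .rel R ts

variable {M : Type*} [L.Structure M]

/-- Semantics of a literal: the set of states in which it is true. -/
def sem : Lit L 𝒳 → Set (𝒳 → M)
  | .eq t₁ t₂ => {ω | t₁.realize ω = t₂.realize ω}
  | .ne t₁ t₂ => {ω | t₁.realize ω ≠ t₂.realize ω}
  | .rel R ts => {ω | Language.Structure.RelMap R (fun i => (ts i).realize ω)}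
  | .nrel R ts => {ω | ¬ Language.Structure.RelMap R (fun i => (ts i).realize ω)}

end Lit

/-- The set of object variables occurring in a term. -/
def tvars {L : Language} {𝒳 : Type*} : L.Term 𝒳 → Set 𝒳
  | .var x => {x}
  | .func _ ts => ⋃ i, tvars (ts i)

/-- The set of object variables occurring in a literal. -/
def Lit.ovars {L : Language} {𝒳 : Type*} : Lit L 𝒳 → Set 𝒳
  | .eq t₁ t₂ => tvars t₁ ∪ tvars t₂
  | .ne t₁ t₂ => tvars t₁ ∪ tvars t₂
  | .rel _ ts => ⋃ i, tvars (ts i)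
  | .nrel _ ts => ⋃ i, tvars (ts i)

/-! ## Syntax of the first-order modal μ-calculus -/

/-- Formulas of the first-order modal μ-calculus `Lμ_𝒱` (raw syntax). -/
inductive MuF (L : Language) (𝒳 Act V : Type*) where
  | lit (p : Lit L 𝒳)
  | var (X : V ⊕ V)
  | or (φ₁ φ₂ : MuF L 𝒳 Act V)
  | and (φ₁ φ₂ : MuF L 𝒳 Act V)
  | dia (a : Act) (φ : MuF L 𝒳 Act V)
  | box (a : Act) (φ : MuF L 𝒳 Act V)
  | mu (X : V ⊕ V) (φ : MuF L 𝒳 Act V)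
  | nu (X : V ⊕ V) (φ : MuF L 𝒳 Act V)

namespace MuF

variable {L : Language} {𝒳 Act V : Type*}

/-- The propositional variables (in `𝒱̄`) mentioned anywhere in a formula. -/
def mentions : MuF L 𝒳 Act V → Set (V ⊕ V)
  | .lit _ => ∅
  | .var X => {X}
  | .or φ ψ => φ.mentions ∪ ψ.mentions
  | .and φ ψ => φ.mentions ∪ ψ.mentions
  | .dia _ φ => φ.mentions
  | .box _ φ => φ.mentions
  | .mu X φ => {X} ∪ φ.mentions
  | .nu X φ => {X} ∪ φ.mentions

/-- Well-formedness: in `μX.ψ` and `νX.ψ` the body `ψ` may not mention `X̄`.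
This is the constraint built into the grammar of `Lμ_𝒱`. -/
def WF : MuF L 𝒳 Act V → Prop
  | .lit _ => True
  | .var _ => True
  | .or φ ψ => φ.WF ∧ ψ.WF
  | .and φ ψ => φ.WF ∧ ψ.WF
  | .dia _ φ => φ.WF
  | .box _ φ => φ.WF
  | .mu X φ => bar X ∉ φ.mentions ∧ φ.WF
  | .nu X φ => bar X ∉ φ.mentions ∧ φ.WF

/-- The free propositional variables of a formula. -/
def freeVars : MuF L 𝒳 Act V → Set (V ⊕ V)
  | .lit _ => ∅
  | .var X => {X}
  | .or φ ψ => φ.freeVars ∪ ψ.freeVars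
  | .and φ ψ => φ.freeVars ∪ ψ.freeVars
  | .dia _ φ => φ.freeVars
  | .box _ φ => φ.freeVars
  | .mu X φ => φ.freeVars \ {X, bar X}
  | .nu X φ => φ.freeVars \ {X, bar X}

/-- The propositional variables bound by a fixpoint operator somewhere in a formula. -/
def boundVars : MuF L 𝒳 Act V → Set (V ⊕ V)
  | .lit _ => ∅
  | .var _ => ∅
  | .or φ ψ => φ.boundVars ∪ ψ.boundVars
  | .and φ ψ => φ.boundVars ∪ ψ.boundVars
  | .dia _ φ => φ.boundVars
  | .box _ φ => φ.boundVars
  | .mu X φ => {X} ∪ φ.boundVars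
  | .nu X φ => {X} ∪ φ.boundVars

/-- The list of bound propositional variables, with multiplicity. -/
def boundList : MuF L 𝒳 Act V → List (V ⊕ V)
  | .lit _ => []
  | .var _ => []
  | .or φ ψ => φ.boundList ++ ψ.boundList
  | .and φ ψ => φ.boundList ++ ψ.boundList
  | .dia _ φ => φ.boundList
  | .box _ φ => φ.boundList
  | .mu X φ => X :: φ.boundList
  | .nu X φ => X :: φ.boundList

/-- Every propositional variable is bound at most once. -/
def BoundOnce (φ : MuF L 𝒳 Act V) : Prop := (φ.boundList.map unbar).Nodup

/-- The transition symbols occurring in a formula. -/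
def acts : MuF L 𝒳 Act V → Set Act
  | .lit _ => ∅
  | .var _ => ∅
  | .or φ ψ => φ.acts ∪ ψ.acts
  | .and φ ψ => φ.acts ∪ ψ.acts
  | .dia a φ => {a} ∪ φ.acts
  | .box a φ => {a} ∪ φ.acts
  | .mu _ φ => φ.acts
  | .nu _ φ => φ.acts

/-- The complement `φ̄` of an `Lμ_𝒱`-formula. -/
def compl : MuF L 𝒳 Act V → MuF L 𝒳 Act V
  | .lit p => .lit p.neg
  | .var X => .var (bar X)
  | .or φ ψ => .and φ.compl ψ.compl
  | .and φ ψ => .or φ.compl ψ.compl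
  | .dia a φ => .box a φ.compl
  | .box a φ => .dia a φ.compl
  | .mu X φ => .nu (bar X) φ.compl
  | .nu X φ => .mu (bar X) φ.compl

/-- Implication `φ → ψ`, an abbreviation for `φ̄ ∨ ψ`. -/
def imp (φ ψ : MuF L 𝒳 Act V) : MuF L 𝒳 Act V := .or φ.compl ψ

/-- Bi-implication `φ ↔ ψ`. -/
def iff (φ ψ : MuF L 𝒳 Act V) : MuF L 𝒳 Act V := .and (imp φ ψ) (imp ψ φ)

variable [DecidableEq V]

/-- Substitution `φ[ψ/X]` of `ψ` for all free occurrences of the propositional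
variable `X` (and of `ψ̄` for all free occurrences of its complement). -/
def subst (X : V ⊕ V) (ψ : MuF L 𝒳 Act V) : MuF L 𝒳 Act V → MuF L 𝒳 Act V
  | .lit p => .lit p
  | .var Y => if Y = X then ψ else if Y = bar X then ψ.compl else .var Y
  | .or φ₁ φ₂ => .or (subst X ψ φ₁) (subst X ψ φ₂)
  | .and φ₁ φ₂ => .and (subst X ψ φ₁) (subst X ψ φ₂)
  | .dia a φ => .dia a (subst X ψ φ)
  | .box a φ => .box a (subst X ψ φ)
  | .mu Y φ => if X = Y ∨ X = bar Y then .mu Y φ else .mu Y (subst X ψ φ)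
  | .nu Y φ => if X = Y ∨ X = bar Y then .nu Y φ else .nu Y (subst X ψ φ)

/-- `X` is free for `ψ` in `φ`: no free occurrence of `X` in `φ` is in the scope of a
fixpoint operator binding a free propositional variable of `ψ`. -/
def FreeFor (X : V ⊕ V) (ψ : MuF L 𝒳 Act V) : MuF L 𝒳 Act V → Prop
  | .lit _ => True
  | .var _ => True
  | .or φ₁ φ₂ => FreeFor X ψ φ₁ ∧ FreeFor X ψ φ₂
  | .and φ₁ φ₂ => FreeFor X ψ φ₁ ∧ FreeFor X ψ φ₂
  | .dia _ φ => FreeFor X ψ φ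
  | .box _ φ => FreeFor X ψ φ
  | .mu Y φ => X = Y ∨ X = bar Y ∨
      (((X ∈ φ.freeVars ∨ bar X ∈ φ.freeVars) → (Y ∉ ψ.freeVars ∧ bar Y ∉ ψ.freeVars)) ∧
        FreeFor X ψ φ)
  | .nu Y φ => X = Y ∨ X = bar Y ∨
      (((X ∈ φ.freeVars ∨ bar X ∈ φ.freeVars) → (Y ∉ ψ.freeVars ∧ bar Y ∉ ψ.freeVars)) ∧
        FreeFor X ψ φ)

end MuF

/-! ## Semantics of the first-order modal μ-calculus -/

section MuSem

variable {L : Language} {𝒳 Act V : Type*} {M : Type*} [L.Structure M] [DecidableEq V]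

/-- The extension of a valuation `Ω : 𝒱 → 𝒫(𝒮)` to barred propositional variables,
with `Ω(X̄) = 𝒮 ∖ Ω(X)`. -/
def barVal (Ω : V → Set (𝒳 → M)) : V ⊕ V → Set (𝒳 → M) :=
  Sum.elim Ω (fun x => (Ω x)ᶜ)

/-- The modified valuation `Ω[E/X]` for `X ∈ 𝒱̄`. -/
def modif (Ω : V → Set (𝒳 → M)) : V ⊕ V → Set (𝒳 → M) → V → Set (𝒳 → M)
  | .inl x, E => Function.update Ω x E
  | .inr x, E => Function.update Ω x Eᶜ

variable (tr : Act → (𝒳 → M) → (𝒳 → M) → Prop)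

/-- Denotational semantics of `Lμ_𝒱`-formulas. -/
def MuF.sem : MuF L 𝒳 Act V → (V → Set (𝒳 → M)) → Set (𝒳 → M)
  | .lit p, _ => p.sem
  | .var X, Ω => barVal Ω X
  | .or φ ψ, Ω => φ.sem Ω ∪ ψ.sem Ω
  | .and φ ψ, Ω => φ.sem Ω ∩ ψ.sem Ω
  | .dia a φ, Ω => {ω | ∃ ν, tr a ω ν ∧ ν ∈ φ.sem Ω}
  | .box a φ, Ω => {ω | ∀ ν, tr a ω ν → ν ∈ φ.sem Ω}
  | .mu X φ, Ω => ⋂₀ {D | φ.sem (modif Ω X D) ⊆ D}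
  | .nu X φ, Ω => ⋃₀ {D | D ⊆ φ.sem (modif Ω X D)}

end MuSem

/-! ## Syntax of first-order game logic -/

universe uL vL u𝒳 uA uV

mutual
/-- Formulas of first-order game logic `GL_𝒱`. -/
inductive GLF (L : Language) (𝒳 : Type u𝒳) (Act : Type uA) (V : Type uV) where
  | lit (p : Lit L 𝒳)
  | var (X : V)
  | not (φ : GLF L 𝒳 Act V)
  | or (φ₁ φ₂ : GLF L 𝒳 Act V)
  | dia (γ : GLG L 𝒳 Act V) (φ : GLF L 𝒳 Act V)

/-- Games of first-order game logic `GL_𝒱`. -/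
inductive GLG (L : Language) (𝒳 : Type u𝒳) (Act : Type uA) (V : Type uV) where
  | act (a : Act)
  | test (φ : GLF L 𝒳 Act V)
  | choice (γ₁ γ₂ : GLG L 𝒳 Act V)
  | seq (γ₁ γ₂ : GLG L 𝒳 Act V)
  | star (γ : GLG L 𝒳 Act V)
  | dual (γ : GLG L 𝒳 Act V)
end

section GLDefs

variable {L : Language} {𝒳 Act V : Type*}

mutual
/-- Propositional variables occurring in a game-logic formula. -/
def GLF.pvars : GLF L 𝒳 Act V → Set V
  | .lit _ => ∅
  | .var X => {X}
  | .not φ => φ.pvars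
  | .or φ ψ => φ.pvars ∪ ψ.pvars
  | .dia γ φ => γ.pvars ∪ φ.pvars

/-- Propositional variables occurring in a game. -/
def GLG.pvars : GLG L 𝒳 Act V → Set V
  | .act _ => ∅
  | .test φ => φ.pvars
  | .choice γ₁ γ₂ => γ₁.pvars ∪ γ₂.pvars
  | .seq γ₁ γ₂ => γ₁.pvars ∪ γ₂.pvars
  | .star γ => γ.pvars
  | .dual γ => γ.pvars
end

mutual
/-- Transition symbols occurring in a game-logic formula. -/
def GLF.acts : GLF L 𝒳 Act V → Set Act
  | .lit _ => ∅
  | .var _ => ∅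
  | .not φ => φ.acts
  | .or φ ψ => φ.acts ∪ ψ.acts
  | .dia γ φ => γ.acts ∪ φ.acts

/-- Transition symbols occurring in a game. -/
def GLG.acts : GLG L 𝒳 Act V → Set Act
  | .act a => {a}
  | .test φ => φ.acts
  | .choice γ₁ γ₂ => γ₁.acts ∪ γ₂.acts
  | .seq γ₁ γ₂ => γ₁.acts ∪ γ₂.acts
  | .star γ => γ.acts
  | .dual γ => γ.acts
end

variable [DecidableEq V]

mutual
/-- Substitution of the game-logic formula `χ` for the propositional variable `X`
(everywhere, including inside tests of games). -/
def GLF.psub (X : V) (χ : GLF L 𝒳 Act V) : GLF L 𝒳 Act V → GLF L 𝒳 Act V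
  | .lit p => .lit p
  | .var Y => if Y = X then χ else .var Y
  | .not φ => .not (GLF.psub X χ φ)
  | .or φ ψ => .or (GLF.psub X χ φ) (GLF.psub X χ ψ)
  | .dia γ φ => .dia (GLG.psub X χ γ) (GLF.psub X χ φ)

def GLG.psub (X : V) (χ : GLF L 𝒳 Act V) : GLG L 𝒳 Act V → GLG L 𝒳 Act V
  | .act a => .act a
  | .test φ => .test (GLF.psub X χ φ)
  | .choice γ₁ γ₂ => .choice (GLG.psub X χ γ₁) (GLG.psub X χ γ₂)
  | .seq γ₁ γ₂ => .seq (GLG.psub X χ γ₁) (GLG.psub X χ γ₂)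
  | .star γ => .star (GLG.psub X χ γ)
  | .dual γ => .dual (GLG.psub X χ γ)
end

/-- Implication in game logic. -/
def GLF.gimp (φ ψ : GLF L 𝒳 Act V) : GLF L 𝒳 Act V := .or (.not φ) ψ

/-- Conjunction in game logic. -/
def GLF.gand (φ ψ : GLF L 𝒳 Act V) : GLF L 𝒳 Act V := .not (.or (.not φ) (.not ψ))

/-- Bi-implication in game logic. -/
def GLF.giff (φ ψ : GLF L 𝒳 Act V) : GLF L 𝒳 Act V := GLF.gand (GLF.gimp φ ψ) (GLF.gimp ψ φ)

end GLDefs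

/-! ## Semantics of first-order game logic -/

section GLSem

variable {L : Language} {𝒳 Act V : Type*} {M : Type*} [L.Structure M]
variable (tr : Act → (𝒳 → M) → (𝒳 → M) → Prop)

mutual
/-- Denotational semantics of game-logic formulas. -/
def GLF.sem : GLF L 𝒳 Act V → (V → Set (𝒳 → M)) → Set (𝒳 → M)
  | .lit p, _ => p.sem
  | .var X, Ω => Ω X
  | .not φ, Ω => (φ.sem Ω)ᶜ
  | .or φ ψ, Ω => φ.sem Ω ∪ ψ.sem Ω
  | .dia γ φ, Ω => γ.sem Ω (φ.sem Ω)

/-- Denotational semantics of games: `γ.sem tr Ω D` is the set of states from which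
Angel has a winning strategy in `γ` to reach `D`. -/
def GLG.sem : GLG L 𝒳 Act V → (V → Set (𝒳 → M)) → Set (𝒳 → M) → Set (𝒳 → M)
  | .act a, _, D => {ω | ∃ ν, tr a ω ν ∧ ν ∈ D}
  | .test φ, Ω, D => φ.sem Ω ∩ D
  | .choice γ₁ γ₂, Ω, D => γ₁.sem Ω D ∪ γ₂.sem Ω D
  | .seq γ₁ γ₂, Ω, D => γ₁.sem Ω (γ₂.sem Ω D)
  | .star γ, Ω, D => ⋂₀ {Z | D ∪ γ.sem Ω Z ⊆ Z}
  | .dual γ, Ω, D => (γ.sem Ω Dᶜ)ᶜ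
end

end GLSem


/-! ## The translation ♯ from game logic into the μ-calculus -/

section Sharp

variable {L : Language} {𝒳 Act V : Type*}

/-- The translation `♯` of `GL_𝒱`-formulas into `Lμ_𝒱`-formulas, as a relation
(the clause for `⟨γ*⟩φ` chooses a fresh propositional variable `X`). -/
inductive Sharp : GLF L 𝒳 Act V → MuF L 𝒳 Act V → Prop
  | lit (p) : Sharp (.lit p) (.lit p)
  | var (X) : Sharp (.var X) (.var (Sum.inl X))
  | not {φ m} : Sharp φ m → Sharp (.not φ) m.compl
  | or {φ₁ φ₂ m₁ m₂} : Sharp φ₁ m₁ → Sharp φ₂ m₂ → Sharp (.or φ₁ φ₂) (.or m₁ m₂)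
  | act {a φ m} : Sharp φ m → Sharp (.dia (.act a) φ) (.dia a m)
  | test {φ₁ φ₂ m₁ m₂} : Sharp φ₁ m₁ → Sharp φ₂ m₂ → Sharp (.dia (.test φ₁) φ₂) (.and m₁ m₂)
  | choice {γ₁ γ₂ φ m₁ m₂} : Sharp (.dia γ₁ φ) m₁ → Sharp (.dia γ₂ φ) m₂ →
      Sharp (.dia (.choice γ₁ γ₂) φ) (.or m₁ m₂)
  | seq {γ₁ γ₂ φ m} : Sharp (.dia γ₁ (.dia γ₂ φ)) m → Sharp (.dia (.seq γ₁ γ₂) φ) m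
  | dual {γ φ m} : Sharp (.dia γ (.not φ)) m → Sharp (.dia (.dual γ) φ) m.compl
  | star {γ φ X m} : X ∉ φ.pvars → X ∉ γ.pvars →
      Sharp (.or φ (.dia γ (.var X))) m →
      Sharp (.dia (.star γ) φ) (.mu (Sum.inl X) m)

end Sharp

/-! ## The translation of μ-calculus formulas into games (dictionaries) -/

section Flat

variable {L : Language} {𝒳 Act V : Type*} [DecidableEq V]

/-- A barred propositional variable as a game logic formula (`X̄` is `¬X`). -/
def gvar : V ⊕ V → GLF L 𝒳 Act V := Sum.elim .var (fun x => .not (.var x))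

/-- A canonical true game-logic formula `⊤`. -/
def glTrue (ℓ : 𝒳) : GLF L 𝒳 Act V := .lit (.eq (.var ℓ) (.var ℓ))

/-- A canonical false game-logic formula `⊥`. -/
def glFalse (ℓ : 𝒳) : GLF L 𝒳 Act V := .lit (.ne (.var ℓ) (.var ℓ))

/-- The dictionary `ϑ[X]`, treating `X` (and `X̄`) as bound. -/
def dictUp (ϑ : V → Bool) (X : V ⊕ V) : V → Bool := Function.update ϑ (unbar X) true

/-- A dictionary is compatible with a formula iff it takes value `0` on all
propositional variables bound in the formula. -/
def Compat (ϑ : V → Bool) (φ : MuF L 𝒳 Act V) : Prop :=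
  ∀ X ∈ φ.boundVars, ϑ (unbar X) = false

/-- Demonic choice `γ₁ ∩ γ₂`. -/
def GLG.dchoice (γ₁ γ₂ : GLG L 𝒳 Act V) : GLG L 𝒳 Act V := .dual (.choice (.dual γ₁) (.dual γ₂))

/-- Demonic repetition `γ^×`. -/
def GLG.cross (γ : GLG L 𝒳 Act V) : GLG L 𝒳 Act V := .dual (.star (.dual γ))

/-- The translation `φ^ϑ` of an `Lμ_𝒱`-formula into a `GL_𝒱`-game, relative to a
dictionary `ϑ`, a control variable `ℓ`, constant symbols `c_X`, and the deterministic
assignment transition symbols `asn`. -/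
def trGame (ℓ : 𝒳) (c : V ⊕ V → L.Constants) (asn : 𝒳 → L.Term 𝒳 → Act) :
    MuF L 𝒳 Act V → (V → Bool) → GLG L 𝒳 Act V
  | .lit p, _ => .seq (.test (.lit p)) (.dual (.test (glFalse ℓ)))
  | .var X, ϑ =>
      if ϑ (unbar X) then .act (asn ℓ (Language.Constants.term (c X)))
      else .seq (.test (gvar X)) (.dual (.test (glFalse ℓ)))
  | .or φ ψ, ϑ => .choice (trGame ℓ c asn φ ϑ) (trGame ℓ c asn ψ ϑ)
  | .and φ ψ, ϑ => GLG.dchoice (trGame ℓ c asn φ ϑ) (trGame ℓ c asn ψ ϑ)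
  | .dia a φ, ϑ => .seq (.act a) (trGame ℓ c asn φ ϑ)
  | .box a φ, ϑ => .seq (.dual (.act a)) (trGame ℓ c asn φ ϑ)
  | .mu X φ, ϑ => .seq (.act (asn ℓ (Language.Constants.term (c X))))
      (.seq (.star (.seq (.test (.lit (.eq (.var ℓ) (Language.Constants.term (c X)))))
                         (trGame ℓ c asn φ (dictUp ϑ X))))
            (.test (.lit (.ne (.var ℓ) (Language.Constants.term (c X))))))
  | .nu X φ, ϑ => .seq (.act (asn ℓ (Language.Constants.term (c X))))
      (.seq (GLG.cross (.seq (.dual (.test (.lit (.eq (.var ℓ) (Language.Constants.term (c X))))))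
                             (trGame ℓ c asn φ (dictUp ϑ X))))
            (.dual (.test (.lit (.ne (.var ℓ) (Language.Constants.term (c X)))))))

/-- The translation `ψ♭ = ⟨ψ^η⟩⊤` of an `Lμ`-formula into a `GL`-formula,
where `η` is the dictionary that is `0` everywhere. -/
def flatF (ℓ : 𝒳) (c : V ⊕ V → L.Constants) (asn : 𝒳 → L.Term 𝒳 → Act)
    (ψ : MuF L 𝒳 Act V) : GLF L 𝒳 Act V :=
  .dia (trGame ℓ c asn ψ (fun _ => false)) (glTrue ℓ)

/-- The object variables occurring (in literals) in a μ-calculus formula. -/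
def MuF.ovars : MuF L 𝒳 Act V → Set 𝒳
  | .lit p => p.ovars
  | .var _ => ∅
  | .or φ ψ => φ.ovars ∪ ψ.ovars
  | .and φ ψ => φ.ovars ∪ ψ.ovars
  | .dia _ φ => φ.ovars
  | .box _ φ => φ.ovars
  | .mu _ φ => φ.ovars
  | .nu _ φ => φ.ovars

variable {M : Type*} [DecidableEq 𝒳]

/-- Object variable `y` is independent of transition `a` under interpretation `tr`:
whenever `(ω,ν) ∈ ⟦a⟧` then also `(ω[b/y],ν[b/y]) ∈ ⟦a⟧`. -/
def IndepAct (tr : Act → (𝒳 → M) → (𝒳 → M) → Prop) (y : 𝒳) (a : Act) : Prop :=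
  ∀ (b : M) ω ν, tr a ω ν → tr a (Function.update ω y b) (Function.update ν y b)

/-- A valuation is independent of the object variable `y`. -/
def IndepVal (y : 𝒳) (Ω : V → Set (𝒳 → M)) : Prop :=
  ∀ (X : V) (b : M) (ω : 𝒳 → M), ω ∈ Ω X ↔ Function.update ω y b ∈ Ω X

end Flat

/-! ## Signatures with deterministic and nondeterministic assignments -/

/-- Transition symbols of a signature with deterministic and nondeterministic
assignments: base symbols from `A₀`, deterministic assignments `x := θ`, and
nondeterministic assignments `x := *`. -/
inductive CAct (L : Language) (𝒳 : Type u𝒳) (A₀ : Type uA) where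
  | base (a : A₀)
  | asn (x : 𝒳) (θ : L.Term 𝒳)
  | rand (x : 𝒳)

section CActDefs

variable {L : Language} {𝒳 A₀ : Type*} [DecidableEq 𝒳]

/-- Substitution of the term `θ` for the object variable `x` in a term. -/
def tsub (x : 𝒳) (θ : L.Term 𝒳) (t : L.Term 𝒳) : L.Term 𝒳 :=
  t.subst (fun y => if y = x then θ else .var y)

/-- Swapping the object variables `x` and `y` in a term. -/
def tswap (x y : 𝒳) (t : L.Term 𝒳) : L.Term 𝒳 := t.relabel (Equiv.swap x y)

/-- Substitution in literals. -/
def Lit.osub (x : 𝒳) (θ : L.Term 𝒳) : Lit L 𝒳 → Lit L 𝒳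
  | .eq t₁ t₂ => .eq (tsub x θ t₁) (tsub x θ t₂)
  | .ne t₁ t₂ => .ne (tsub x θ t₁) (tsub x θ t₂)
  | .rel R ts => .rel R (fun i => tsub x θ (ts i))
  | .nrel R ts => .nrel R (fun i => tsub x θ (ts i))

/-- Swapping object variables in literals. -/
def Lit.oswap (x y : 𝒳) : Lit L 𝒳 → Lit L 𝒳
  | .eq t₁ t₂ => .eq (tswap x y t₁) (tswap x y t₂)
  | .ne t₁ t₂ => .ne (tswap x y t₁) (tswap x y t₂)
  | .rel R ts => .rel R (fun i => tswap x y (ts i))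
  | .nrel R ts => .nrel R (fun i => tswap x y (ts i))

namespace CAct

/-- Whether the transition binds (assigns) the object variable `x`. -/
def bindsB (x : 𝒳) : CAct L 𝒳 A₀ → Bool
  | .base _ => false
  | .asn y _ => decide (y = x)
  | .rand y => decide (y = x)

/-- Substitution of `θ` for `x` in a transition symbol. -/
def osub (x : 𝒳) (θ : L.Term 𝒳) : CAct L 𝒳 A₀ → CAct L 𝒳 A₀
  | .base a => .base a
  | .asn y η => .asn y (tsub x θ η)
  | .rand y => .rand y

/-- Renaming `x ↔ y` in a transition symbol, using the signature's closure `sw`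
of base transition symbols under renaming. -/
def oswap (sw : 𝒳 → 𝒳 → A₀ → A₀) (x y : 𝒳) : CAct L 𝒳 A₀ → CAct L 𝒳 A₀
  | .base a => .base (sw x y a)
  | .asn z η => .asn (Equiv.swap x y z) (tswap x y η)
  | .rand z => .rand (Equiv.swap x y z)

/-- The object variables a transition symbol may depend on, given an interface
`fvB` for base transition symbols. -/
def ovarsF (fvB : A₀ → Set 𝒳) : CAct L 𝒳 A₀ → Set 𝒳
  | .base b => fvB b
  | .asn x θ => {x} ∪ tvars θ
  | .rand x => {x}

/-- The object variables bound (assigned) by a transition symbol. -/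
def obinds : CAct L 𝒳 A₀ → Set 𝒳
  | .base _ => ∅
  | .asn x _ => {x}
  | .rand x => {x}

/-- The base transition symbols of a transition symbol. -/
def bases : CAct L 𝒳 A₀ → Set A₀
  | .base a => {a}
  | .asn _ _ => ∅
  | .rand _ => ∅

end CAct

/-- Interpretation of transition symbols in an assignment and quantifier structure:
base symbols are interpreted by `trb`, deterministic assignments update the assigned
variable to the value of the term, nondeterministic assignments update it arbitrarily. -/
def ctrans {M : Type*} [L.Structure M] (trb : A₀ → (𝒳 → M) → (𝒳 → M) → Prop) :
    CAct L 𝒳 A₀ → (𝒳 → M) → (𝒳 → M) → Prop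
  | .base b => trb b
  | .asn x θ => fun ω ν => ν = Function.update ω x (θ.realize ω)
  | .rand x => fun ω ν => ∃ e : M, ν = Function.update ω x e

end CActDefs

/-! ## Syntactic operations on μ-calculus formulas over such signatures -/

section MuCalcOps

variable {L : Language} {𝒳 V A₀ : Type*} [DecidableEq 𝒳] [DecidableEq V]

namespace MuF

/-- Substitution `φ[θ/x]` of a term for an object variable. Base transition symbols
are unaffected; substitution stops under transitions binding `x`. -/
def osub (x : 𝒳) (θ : L.Term 𝒳) :
    MuF L 𝒳 (CAct L 𝒳 A₀) V → MuF L 𝒳 (CAct L 𝒳 A₀) V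
  | .lit p => .lit (p.osub x θ)
  | .var X => .var X
  | .or φ ψ => .or (osub x θ φ) (osub x θ ψ)
  | .and φ ψ => .and (osub x θ φ) (osub x θ ψ)
  | .dia a φ => .dia (a.osub x θ) (if a.bindsB x then φ else osub x θ φ)
  | .box a φ => .box (a.osub x θ) (if a.bindsB x then φ else osub x θ φ)
  | .mu X φ => .mu X (osub x θ φ)
  | .nu X φ => .nu X (osub x θ φ)

/-- Renaming `φₓʸ`, swapping the object variables `x` and `y` throughout. -/
def oswap (sw : 𝒳 → 𝒳 → A₀ → A₀) (x y : 𝒳) :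
    MuF L 𝒳 (CAct L 𝒳 A₀) V → MuF L 𝒳 (CAct L 𝒳 A₀) V
  | .lit p => .lit (p.oswap x y)
  | .var X => .var X
  | .or φ ψ => .or (oswap sw x y φ) (oswap sw x y ψ)
  | .and φ ψ => .and (oswap sw x y φ) (oswap sw x y ψ)
  | .dia a φ => .dia (a.oswap sw x y) (oswap sw x y φ)
  | .box a φ => .box (a.oswap sw x y) (oswap sw x y φ)
  | .mu X φ => .mu X (oswap sw x y φ)
  | .nu X φ => .nu X (oswap sw x y φ)

/-- The object variables a formula may depend on. -/
def ovarsF (fvB : A₀ → Set 𝒳) : MuF L 𝒳 (CAct L 𝒳 A₀) V → Set 𝒳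
  | .lit p => p.ovars
  | .var _ => ∅
  | .or φ ψ => ovarsF fvB φ ∪ ovarsF fvB ψ
  | .and φ ψ => ovarsF fvB φ ∪ ovarsF fvB ψ
  | .dia a φ => a.ovarsF fvB ∪ ovarsF fvB φ
  | .box a φ => a.ovarsF fvB ∪ ovarsF fvB φ
  | .mu _ φ => ovarsF fvB φ
  | .nu _ φ => ovarsF fvB φ

/-- The object variables bound by some transition occurring in the formula. -/
def obindsC : MuF L 𝒳 (CAct L 𝒳 A₀) V → Set 𝒳
  | .lit _ => ∅
  | .var _ => ∅
  | .or φ ψ => obindsC φ ∪ obindsC ψ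
  | .and φ ψ => obindsC φ ∪ obindsC ψ
  | .dia a φ => a.obinds ∪ obindsC φ
  | .box a φ => a.obinds ∪ obindsC φ
  | .mu _ φ => obindsC φ
  | .nu _ φ => obindsC φ

/-- The base transition symbols occurring in a formula. -/
def baseActs : MuF L 𝒳 (CAct L 𝒳 A₀) V → Set A₀
  | .lit _ => ∅
  | .var _ => ∅
  | .or φ ψ => baseActs φ ∪ baseActs ψ
  | .and φ ψ => baseActs φ ∪ baseActs ψ
  | .dia a φ => a.bases ∪ baseActs φ
  | .box a φ => a.bases ∪ baseActs φ
  | .mu _ φ => baseActs φ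
  | .nu _ φ => baseActs φ

end MuF

/-- Admissibility of the substitution `φ[θ/x]` for the axiom `∃I`. -/
def OAdm (fvB : A₀ → Set 𝒳) (x : 𝒳) (θ : L.Term 𝒳)
    (φ : MuF L 𝒳 (CAct L 𝒳 A₀) V) : Prop :=
  x ∉ φ.ovarsF fvB ∨
    (φ.baseActs = ∅ ∧ (∀ y ∈ tvars θ, y ∉ φ.obindsC) ∧ φ.freeVars = ∅)

end MuCalcOps

/-! ## Propositional tautologies and equality axioms for the μ-calculus -/

section MuAx

variable {L : Language} {𝒳 Act V : Type*} [DecidableEq V]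

namespace MuF

/-- Purely propositional formulas: built from propositional variables by `∨` and `∧`. -/
def PureProp : MuF L 𝒳 Act V → Prop
  | .var _ => True
  | .or φ ψ => PureProp φ ∧ PureProp ψ
  | .and φ ψ => PureProp φ ∧ PureProp ψ
  | _ => False

/-- Evaluation of a purely propositional formula under a Boolean assignment,
interpreting bars as negation. -/
def propEval (v : V → Prop) : MuF L 𝒳 Act V → Prop
  | .var (.inl X) => v X
  | .var (.inr X) => ¬ v X
  | .or φ ψ => propEval v φ ∨ propEval v ψ
  | .and φ ψ => propEval v φ ∧ propEval v ψ
  | _ => False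

end MuF

/-- Propositional tautologies: the smallest set of formulas closed under substitution
of propositional variables that contains all valid purely propositional formulas. -/
inductive MuTaut : MuF L 𝒳 Act V → Prop
  | base {φ : MuF L 𝒳 Act V} : φ.PureProp → (∀ v : V → Prop, φ.propEval v) → MuTaut φ
  | subst {φ : MuF L 𝒳 Act V} (X : V ⊕ V) (ψ : MuF L 𝒳 Act V) :
      MuTaut φ → MuTaut (MuF.subst X ψ φ)

/-- Iterated implication `φ₁ → (φ₂ → ⋯ → χ)`. -/
def impChain : List (MuF L 𝒳 Act V) → MuF L 𝒳 Act V → MuF L 𝒳 Act V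
  | [], χ => χ
  | φ :: t, χ => φ.imp (impChain t χ)

/-- The first-order equality axioms: equality is a congruence with respect to the
function and predicate symbols of the first-order signature. -/
inductive MuEqAx : MuF L 𝒳 Act V → Prop
  | refl (t : L.Term 𝒳) : MuEqAx (.lit (.eq t t))
  | symm (t₁ t₂ : L.Term 𝒳) : MuEqAx ((MuF.lit (.eq t₁ t₂)).imp (.lit (.eq t₂ t₁)))
  | trans (t₁ t₂ t₃ : L.Term 𝒳) :
      MuEqAx ((MuF.lit (.eq t₁ t₂)).imp ((MuF.lit (.eq t₂ t₃)).imp (.lit (.eq t₁ t₃))))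
  | congFun {n : ℕ} (f : L.Functions n) (ts ts' : Fin n → L.Term 𝒳) :
      MuEqAx (impChain ((List.finRange n).map fun i => MuF.lit (.eq (ts i) (ts' i)))
        (.lit (.eq (Language.Term.func f ts) (Language.Term.func f ts'))))
  | congRel {n : ℕ} (R : L.Relations n) (ts ts' : Fin n → L.Term 𝒳) :
      MuEqAx (impChain ((List.finRange n).map fun i => MuF.lit (.eq (ts i) (ts' i)))
        ((MuF.lit (.rel R ts)).imp (.lit (.rel R ts'))))

/-- Renaming of bound propositional variables (α-equivalence). -/
inductive AEq : MuF L 𝒳 Act V → MuF L 𝒳 Act V → Prop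
  | refl (φ) : AEq φ φ
  | symm {φ ψ} : AEq φ ψ → AEq ψ φ
  | trans {φ ψ χ} : AEq φ ψ → AEq ψ χ → AEq φ χ
  | or {φ₁ φ₂ ψ₁ ψ₂} : AEq φ₁ ψ₁ → AEq φ₂ ψ₂ → AEq (.or φ₁ φ₂) (.or ψ₁ ψ₂)
  | and {φ₁ φ₂ ψ₁ ψ₂} : AEq φ₁ ψ₁ → AEq φ₂ ψ₂ → AEq (.and φ₁ φ₂) (.and ψ₁ ψ₂)
  | dia (a) {φ ψ} : AEq φ ψ → AEq (.dia a φ) (.dia a ψ)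
  | box (a) {φ ψ} : AEq φ ψ → AEq (.box a φ) (.box a ψ)
  | mu (X) {φ ψ} : AEq φ ψ → AEq (.mu X φ) (.mu X ψ)
  | nu (X) {φ ψ} : AEq φ ψ → AEq (.nu X φ) (.nu X ψ)
  | muRename {X Y : V ⊕ V} {φ : MuF L 𝒳 Act V} : Y ∉ φ.mentions → bar Y ∉ φ.mentions →
      AEq (.mu X φ) (.mu Y (MuF.subst X (.var Y) φ))
  | nuRename {X Y : V ⊕ V} {φ : MuF L 𝒳 Act V} : Y ∉ φ.mentions → bar Y ∉ φ.mentions →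
      AEq (.nu X φ) (.nu Y (MuF.subst X (.var Y) φ))

end MuAx

/-! ## The Hilbert-style proof calculus for the first-order modal μ-calculus -/

section MuCalc

variable {L : Language} {𝒳 V A₀ : Type*} [DecidableEq 𝒳] [DecidableEq V]

/-- Provability in the `Lμ`-calculus from the theory `T`, by a derivation all of whose
formulas belong to `S`. The calculus has rules `MP`, `Mₐ` and `FPμ`, the axioms
`μ` (unfolding), `∃I`, `V`, `⟨:=⟩`, all propositional tautologies and equality axioms,
and permits renaming of bound propositional variables. -/
inductive MuPrvIn (sw : 𝒳 → 𝒳 → A₀ → A₀) (fvB : A₀ → Set 𝒳)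
    (S : Set (MuF L 𝒳 (CAct L 𝒳 A₀) V)) (T : Set (MuF L 𝒳 (CAct L 𝒳 A₀) V)) :
    MuF L 𝒳 (CAct L 𝒳 A₀) V → Prop
  | hyp {φ} : φ ∈ T → φ ∈ S → MuPrvIn sw fvB S T φ
  | taut {φ} : MuTaut φ → φ.WF → φ ∈ S → MuPrvIn sw fvB S T φ
  | eqax {φ} : MuEqAx φ → φ ∈ S → MuPrvIn sw fvB S T φ
  | mufix {X φ} : (MuF.mu X φ).WF → MuF.FreeFor X (.mu X φ) φ →
      (MuF.subst X (.mu X φ) φ).iff (.mu X φ) ∈ S →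
      MuPrvIn sw fvB S T ((MuF.subst X (.mu X φ) φ).iff (.mu X φ))
  | existsI {x θ φ} : φ.WF → OAdm fvB x θ φ →
      (φ.osub x θ).imp (.dia (.rand x) φ) ∈ S →
      MuPrvIn sw fvB S T ((φ.osub x θ).imp (.dia (.rand x) φ))
  | vac {x ψ} : ψ.WF → x ∉ ψ.ovarsF fvB → ψ.freeVars = ∅ →
      (MuF.dia (.rand x) ψ).imp ψ ∈ S →
      MuPrvIn sw fvB S T ((MuF.dia (.rand x) ψ).imp ψ)
  | asgn {x y : 𝒳} {θ : L.Term 𝒳} {φ} : φ.WF → y ≠ x → y ∉ tvars θ →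
      y ∉ φ.ovarsF fvB → φ.freeVars = ∅ →
      (MuF.dia (.asn x θ) φ).iff
        (.dia (.rand y) (.and (.lit (.eq (.var y) θ)) (φ.oswap sw x y))) ∈ S →
      MuPrvIn sw fvB S T ((MuF.dia (.asn x θ) φ).iff
        (.dia (.rand y) (.and (.lit (.eq (.var y) θ)) (φ.oswap sw x y))))
  | mp {φ ψ} : MuPrvIn sw fvB S T (ψ.imp φ) → MuPrvIn sw fvB S T ψ → φ ∈ S →
      MuPrvIn sw fvB S T φ
  | mono (a : CAct L 𝒳 A₀) {ψ φ} : MuPrvIn sw fvB S T (ψ.imp φ) →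
      (MuF.dia a ψ).imp (.dia a φ) ∈ S →
      MuPrvIn sw fvB S T ((MuF.dia a ψ).imp (.dia a φ))
  | fpmu {X ψ φ} : MuF.FreeFor X φ ψ → (MuF.mu X ψ).WF →
      MuPrvIn sw fvB S T ((MuF.subst X φ ψ).imp φ) → (MuF.mu X ψ).imp φ ∈ S →
      MuPrvIn sw fvB S T ((MuF.mu X ψ).imp φ)
  | alpha {φ ψ} : AEq φ ψ → MuPrvIn sw fvB S T φ → ψ ∈ S → MuPrvIn sw fvB S T ψ

/-- Provability `T ⊢_Lμ φ` in the `Lμ`-calculus. -/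
abbrev MuPrv (sw : 𝒳 → 𝒳 → A₀ → A₀) (fvB : A₀ → Set 𝒳)
    (T : Set (MuF L 𝒳 (CAct L 𝒳 A₀) V)) : MuF L 𝒳 (CAct L 𝒳 A₀) V → Prop :=
  MuPrvIn sw fvB Set.univ T

end MuCalc

/-! ## Syntactic operations on game logic formulas over assignment signatures -/

section GLCalcOps

variable {L : Language} {𝒳 V A₀ : Type*} [DecidableEq 𝒳] [DecidableEq V]

mutual
/-- Substitution `φ[θ/x]` of a term for an object variable in game logic formulas. -/
def GLF.osub (x : 𝒳) (θ : L.Term 𝒳) :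
    GLF L 𝒳 (CAct L 𝒳 A₀) V → GLF L 𝒳 (CAct L 𝒳 A₀) V
  | .lit p => .lit (p.osub x θ)
  | .var X => .var X
  | .not φ => .not (GLF.osub x θ φ)
  | .or φ ψ => .or (GLF.osub x θ φ) (GLF.osub x θ ψ)
  | .dia γ φ => .dia (GLG.osub x θ γ) (GLF.osub x θ φ)

/-- Substitution of a term for an object variable in games. -/
def GLG.osub (x : 𝒳) (θ : L.Term 𝒳) :
    GLG L 𝒳 (CAct L 𝒳 A₀) V → GLG L 𝒳 (CAct L 𝒳 A₀) V
  | .act a => .act (a.osub x θ)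
  | .test φ => .test (GLF.osub x θ φ)
  | .choice γ₁ γ₂ => .choice (GLG.osub x θ γ₁) (GLG.osub x θ γ₂)
  | .seq γ₁ γ₂ => .seq (GLG.osub x θ γ₁) (GLG.osub x θ γ₂)
  | .star γ => .star (GLG.osub x θ γ)
  | .dual γ => .dual (GLG.osub x θ γ)
end

mutual
/-- Renaming `φₓʸ`, swapping the object variables `x` and `y` throughout. -/
def GLF.oswap (sw : 𝒳 → 𝒳 → A₀ → A₀) (x y : 𝒳) :
    GLF L 𝒳 (CAct L 𝒳 A₀) V → GLF L 𝒳 (CAct L 𝒳 A₀) V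
  | .lit p => .lit (p.oswap x y)
  | .var X => .var X
  | .not φ => .not (GLF.oswap sw x y φ)
  | .or φ ψ => .or (GLF.oswap sw x y φ) (GLF.oswap sw x y ψ)
  | .dia γ φ => .dia (GLG.oswap sw x y γ) (GLF.oswap sw x y φ)

def GLG.oswap (sw : 𝒳 → 𝒳 → A₀ → A₀) (x y : 𝒳) :
    GLG L 𝒳 (CAct L 𝒳 A₀) V → GLG L 𝒳 (CAct L 𝒳 A₀) V
  | .act a => .act (a.oswap sw x y)
  | .test φ => .test (GLF.oswap sw x y φ)
  | .choice γ₁ γ₂ => .choice (GLG.oswap sw x y γ₁) (GLG.oswap sw x y γ₂)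
  | .seq γ₁ γ₂ => .seq (GLG.oswap sw x y γ₁) (GLG.oswap sw x y γ₂)
  | .star γ => .star (GLG.oswap sw x y γ)
  | .dual γ => .dual (GLG.oswap sw x y γ)
end

mutual
/-- Object variables a game logic formula may depend on. -/
def GLF.ovarsF (fvB : A₀ → Set 𝒳) : GLF L 𝒳 (CAct L 𝒳 A₀) V → Set 𝒳
  | .lit p => p.ovars
  | .var _ => ∅
  | .not φ => GLF.ovarsF fvB φ
  | .or φ ψ => GLF.ovarsF fvB φ ∪ GLF.ovarsF fvB ψ
  | .dia γ φ => GLG.ovarsF fvB γ ∪ GLF.ovarsF fvB φ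

def GLG.ovarsF (fvB : A₀ → Set 𝒳) : GLG L 𝒳 (CAct L 𝒳 A₀) V → Set 𝒳
  | .act a => a.ovarsF fvB
  | .test φ => GLF.ovarsF fvB φ
  | .choice γ₁ γ₂ => GLG.ovarsF fvB γ₁ ∪ GLG.ovarsF fvB γ₂
  | .seq γ₁ γ₂ => GLG.ovarsF fvB γ₁ ∪ GLG.ovarsF fvB γ₂
  | .star γ => GLG.ovarsF fvB γ
  | .dual γ => GLG.ovarsF fvB γ
end

mutual
/-- Object variables bound by a transition occurring in a formula. -/
def GLF.obindsC : GLF L 𝒳 (CAct L 𝒳 A₀) V → Set 𝒳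
  | .lit _ => ∅
  | .var _ => ∅
  | .not φ => GLF.obindsC φ
  | .or φ ψ => GLF.obindsC φ ∪ GLF.obindsC ψ
  | .dia γ φ => GLG.obindsC γ ∪ GLF.obindsC φ

def GLG.obindsC : GLG L 𝒳 (CAct L 𝒳 A₀) V → Set 𝒳
  | .act a => a.obinds
  | .test φ => GLF.obindsC φ
  | .choice γ₁ γ₂ => GLG.obindsC γ₁ ∪ GLG.obindsC γ₂
  | .seq γ₁ γ₂ => GLG.obindsC γ₁ ∪ GLG.obindsC γ₂
  | .star γ => GLG.obindsC γ
  | .dual γ => GLG.obindsC γ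
end

mutual
/-- The base transition symbols occurring in a formula. -/
def GLF.baseActs : GLF L 𝒳 (CAct L 𝒳 A₀) V → Set A₀
  | .lit _ => ∅
  | .var _ => ∅
  | .not φ => GLF.baseActs φ
  | .or φ ψ => GLF.baseActs φ ∪ GLF.baseActs ψ
  | .dia γ φ => GLG.baseActs γ ∪ GLF.baseActs φ

def GLG.baseActs : GLG L 𝒳 (CAct L 𝒳 A₀) V → Set A₀
  | .act a => a.bases
  | .test φ => GLF.baseActs φ
  | .choice γ₁ γ₂ => GLG.baseActs γ₁ ∪ GLG.baseActs γ₂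
  | .seq γ₁ γ₂ => GLG.baseActs γ₁ ∪ GLG.baseActs γ₂
  | .star γ => GLG.baseActs γ
  | .dual γ => GLG.baseActs γ
end

/-- Admissibility of the substitution `φ[θ/x]` in game logic. -/
def GOAdm (fvB : A₀ → Set 𝒳) (x : 𝒳) (θ : L.Term 𝒳)
    (φ : GLF L 𝒳 (CAct L 𝒳 A₀) V) : Prop :=
  x ∉ φ.ovarsF fvB ∨ (φ.baseActs = ∅ ∧ ∀ y ∈ tvars θ, y ∉ φ.obindsC)

end GLCalcOps

/-! ## Propositional tautologies and equality axioms for game logic -/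

section GLAx

variable {L : Language} {𝒳 Act V : Type*} [DecidableEq V]

/-- Purely propositional game logic formulas. -/
def GLF.pPure : GLF L 𝒳 Act V → Prop
  | .var _ => True
  | .not φ => GLF.pPure φ
  | .or φ ψ => GLF.pPure φ ∧ GLF.pPure ψ
  | _ => False

/-- Evaluation of propositional game logic formulas. -/
def GLF.pEval (v : V → Prop) : GLF L 𝒳 Act V → Prop
  | .var X => v X
  | .not φ => ¬ GLF.pEval v φ
  | .or φ ψ => GLF.pEval v φ ∨ GLF.pEval v ψ
  | _ => False

/-- Propositional tautologies of game logic: closure of the valid purely propositional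
formulas under substitution of propositional variables. -/
inductive GLTaut : GLF L 𝒳 Act V → Prop
  | base {φ : GLF L 𝒳 Act V} : φ.pPure → (∀ v : V → Prop, φ.pEval v) → GLTaut φ
  | subst {φ : GLF L 𝒳 Act V} (X : V) (ψ : GLF L 𝒳 Act V) : GLTaut φ → GLTaut (GLF.psub X ψ φ)

/-- Iterated implication in game logic. -/
def gimpChain : List (GLF L 𝒳 Act V) → GLF L 𝒳 Act V → GLF L 𝒳 Act V
  | [], χ => χ
  | φ :: t, χ => φ.gimp (gimpChain t χ)

/-- The first-order equality axioms for game logic. -/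
inductive GLEqAx : GLF L 𝒳 Act V → Prop
  | refl (t : L.Term 𝒳) : GLEqAx (.lit (.eq t t))
  | symm (t₁ t₂ : L.Term 𝒳) : GLEqAx ((GLF.lit (.eq t₁ t₂)).gimp (.lit (.eq t₂ t₁)))
  | trans (t₁ t₂ t₃ : L.Term 𝒳) :
      GLEqAx ((GLF.lit (.eq t₁ t₂)).gimp ((GLF.lit (.eq t₂ t₃)).gimp (.lit (.eq t₁ t₃))))
  | congFun {n : ℕ} (f : L.Functions n) (ts ts' : Fin n → L.Term 𝒳) :
      GLEqAx (gimpChain ((List.finRange n).map fun i => GLF.lit (.eq (ts i) (ts' i)))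
        (.lit (.eq (Language.Term.func f ts) (Language.Term.func f ts'))))
  | congRel {n : ℕ} (R : L.Relations n) (ts ts' : Fin n → L.Term 𝒳) :
      GLEqAx (gimpChain ((List.finRange n).map fun i => GLF.lit (.eq (ts i) (ts' i)))
        ((GLF.lit (.rel R ts)).gimp (.lit (.rel R ts'))))

end GLAx

/-! ## The Hilbert-style proof calculus for first-order game logic -/

section GLCalc

variable {L : Language} {𝒳 V A₀ : Type*} [DecidableEq 𝒳] [DecidableEq V]

/-- Provability `T ⊢_GL φ` in the `GL`-calculus (operating on `GL`-formulas, i.e.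
formulas without propositional variables), with rules `MP`, `M`, `FP*`, the game
axioms `⟨?⟩`, `⟨∪⟩`, `⟨;⟩`, `⟨*⟩`, `⟨ᵈ⟩`, the axioms `∃I`, `V`, `⟨:=⟩`, and all
propositional tautologies and equality axioms. -/
inductive GLPrv (sw : 𝒳 → 𝒳 → A₀ → A₀) (fvB : A₀ → Set 𝒳)
    (T : Set (GLF L 𝒳 (CAct L 𝒳 A₀) V)) : GLF L 𝒳 (CAct L 𝒳 A₀) V → Prop
  | hyp {φ} : φ ∈ T → GLPrv sw fvB T φ
  | taut {φ} : GLTaut φ → φ.pvars = ∅ → GLPrv sw fvB T φ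
  | eqax {φ} : GLEqAx φ → GLPrv sw fvB T φ
  | existsI {x θ φ} : φ.pvars = ∅ → GOAdm fvB x θ φ →
      GLPrv sw fvB T ((φ.osub x θ).gimp (.dia (.act (.rand x)) φ))
  | vac {x ψ} : ψ.pvars = ∅ → x ∉ ψ.ovarsF fvB →
      GLPrv sw fvB T ((GLF.dia (.act (.rand x)) ψ).gimp ψ)
  | asgn {x y : 𝒳} {θ : L.Term 𝒳} {φ} : φ.pvars = ∅ → y ≠ x → y ∉ tvars θ →
      y ∉ φ.ovarsF fvB →
      GLPrv sw fvB T ((GLF.dia (.act (.asn x θ)) φ).giff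
        (.dia (.act (.rand y)) ((GLF.lit (.eq (.var y) θ)).gand (φ.oswap sw x y))))
  | testAx {ψ φ} : ψ.pvars = ∅ → φ.pvars = ∅ →
      GLPrv sw fvB T ((GLF.dia (.test ψ) φ).giff (ψ.gand φ))
  | choiceAx {γ₁ γ₂ φ} : γ₁.pvars = ∅ → γ₂.pvars = ∅ → φ.pvars = ∅ →
      GLPrv sw fvB T ((GLF.dia (.choice γ₁ γ₂) φ).giff (.or (.dia γ₁ φ) (.dia γ₂ φ)))
  | seqAx {γ₁ γ₂ φ} : γ₁.pvars = ∅ → γ₂.pvars = ∅ → φ.pvars = ∅ →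
      GLPrv sw fvB T ((GLF.dia (.seq γ₁ γ₂) φ).giff (.dia γ₁ (.dia γ₂ φ)))
  | starAx {γ φ} : γ.pvars = ∅ → φ.pvars = ∅ →
      GLPrv sw fvB T ((GLF.dia (.star γ) φ).giff (.or φ (.dia γ (.dia (.star γ) φ))))
  | dualAx {γ φ} : γ.pvars = ∅ → φ.pvars = ∅ →
      GLPrv sw fvB T ((GLF.dia (.dual γ) φ).giff (.not (.dia γ (.not φ))))
  | mp {φ ψ} : GLPrv sw fvB T (ψ.gimp φ) → GLPrv sw fvB T ψ → GLPrv sw fvB T φ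
  | mono (γ : GLG L 𝒳 (CAct L 𝒳 A₀) V) {ψ φ} : γ.pvars = ∅ →
      GLPrv sw fvB T (ψ.gimp φ) →
      GLPrv sw fvB T ((GLF.dia γ ψ).gimp (.dia γ φ))
  | fp {γ ψ φ} : γ.pvars = ∅ →
      GLPrv sw fvB T ((GLF.or ψ (.dia γ φ)).gimp φ) →
      GLPrv sw fvB T ((GLF.dia (.star γ) ψ).gimp φ)

end GLCalc


section Aux
set_option linter.unusedSectionVars false

variable {L : Language} {𝒳 Act V : Type*} [DecidableEq 𝒳] [DecidableEq V]
variable {M : Type*} [L.Structure M]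
variable {tr : Act → (𝒳 → M) → (𝒳 → M) → Prop}

/-- Realization of a term agreeing off of its variables. -/
lemma realize_congr_on {t : L.Term 𝒳} {ω ω' : 𝒳 → M}
    (h : ∀ x ∈ tvars t, ω x = ω' x) : t.realize ω = t.realize ω' := by
  induction t with
  | var x => exact h x (by simp [tvars])
  | func f ts ih =>
      simp only [Language.Term.realize]
      congr 1
      funext i
      exact ih i (fun x hx => h x (by simp [tvars]; exact ⟨i, hx⟩))

lemma realize_const (k : L.Constants) (ω ω' : 𝒳 → M) :
    (Language.Constants.term k : L.Term 𝒳).realize ω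
      = (Language.Constants.term k).realize ω' := by
  simp only [Language.Constants.term, Language.Term.realize]
  congr 1
  funext i
  exact i.elim0

lemma lit_sem_update {p : Lit L 𝒳} {ℓ : 𝒳} (hℓ : ℓ ∉ p.ovars) (b : M) (ω : 𝒳 → M) :
    ω ∈ p.sem (M := M) ↔ Function.update ω ℓ b ∈ p.sem := by
  have key : ∀ t : L.Term 𝒳, ℓ ∉ tvars t →
      t.realize ω = t.realize (Function.update ω ℓ b) := by
    intro t ht
    exact realize_congr_on (fun x hx => by
      rw [Function.update_of_ne]; rintro rfl; exact ht hx)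
  cases p with
  | eq t₁ t₂ =>
      simp only [Lit.ovars, mem_union, not_or] at hℓ
      simp [Lit.sem, key t₁ hℓ.1, key t₂ hℓ.2]
  | ne t₁ t₂ =>
      simp only [Lit.ovars, mem_union, not_or] at hℓ
      simp [Lit.sem, key t₁ hℓ.1, key t₂ hℓ.2]
  | rel R ts =>
      simp only [Lit.ovars, mem_iUnion, not_exists] at hℓ
      have hts : (fun i => (ts i).realize ω)
          = fun i => (ts i).realize (Function.update ω ℓ b) :=
        funext fun i => key (ts i) (hℓ i)
      simp [Lit.sem, hts]
  | nrel R ts =>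
      simp only [Lit.ovars, mem_iUnion, not_exists] at hℓ
      have hts : (fun i => (ts i).realize ω)
          = fun i => (ts i).realize (Function.update ω ℓ b) :=
        funext fun i => key (ts i) (hℓ i)
      simp [Lit.sem, hts]

/-! ### Valuation modification lemmas -/

lemma unbar_bar (X : V ⊕ V) : unbar (bar X) = unbar X := by
  cases X <;> rfl

lemma ne_and_ne_bar_of_unbar_ne {X Y : V ⊕ V} (h : unbar Y ≠ unbar X) :
    Y ≠ X ∧ Y ≠ bar X := by
  constructor <;> rintro rfl
  · exact h rfl
  · exact h (unbar_bar X)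

lemma barVal_modif (Ω : V → Set (𝒳 → M)) (X Y : V ⊕ V) (E : Set (𝒳 → M)) :
    barVal (modif Ω X E) Y
      = if Y = X then E else if Y = bar X then Eᶜ else barVal Ω Y := by
  cases X with
  | inl x =>
      cases Y with
      | inl y =>
          by_cases h : y = x
          · subst h; simp [barVal, modif]
          · simp [barVal, modif, Function.update_of_ne h, bar, h]
      | inr y =>
          by_cases h : y = x
          · subst h; simp [barVal, modif, bar]
          · simp [barVal, modif, Function.update_of_ne h, bar, h]
  | inr x =>
      cases Y with
      | inl y =>
          by_cases h : y = x
          · subst h; simp [barVal, modif, bar]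
          · simp [barVal, modif, Function.update_of_ne h, bar, h]
      | inr y =>
          by_cases h : y = x
          · subst h; simp [barVal, modif, bar]
          · simp [barVal, modif, Function.update_of_ne h, bar, h]

lemma modif_modif_same {X Y : V ⊕ V} (h : unbar X = unbar Y) (Ω : V → Set (𝒳 → M))
    (E D : Set (𝒳 → M)) : modif (modif Ω X E) Y D = modif Ω Y D := by
  cases X <;> cases Y <;>
    · simp only [unbar] at h
      subst h
      simp [modif, Function.update_idem]

lemma modif_comm {X Y : V ⊕ V} (h : unbar X ≠ unbar Y) (Ω : V → Set (𝒳 → M))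
    (E D : Set (𝒳 → M)) : modif (modif Ω X E) Y D = modif (modif Ω Y D) X E := by
  cases X <;> cases Y <;>
    · simp only [unbar, Sum.elim_inl, Sum.elim_inr, id_eq] at h
      simp [modif, Function.update_comm h]

/-! ### Monotonicity of game semantics in the target set -/

theorem glg_sem_mono {tr : Act → (𝒳 → M) → (𝒳 → M) → Prop} :
    ∀ (γ : GLG L 𝒳 Act V) (Ω : V → Set (𝒳 → M)) ⦃D₁ D₂ : Set (𝒳 → M)⦄,
      D₁ ⊆ D₂ → γ.sem tr Ω D₁ ⊆ γ.sem tr Ω D₂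
  | .act a, Ω, D₁, D₂, h => by
      intro ω hω
      obtain ⟨ν, h1, h2⟩ := hω
      exact ⟨ν, h1, h h2⟩
  | .test φ, Ω, D₁, D₂, h => by
      simp only [GLG.sem]
      exact inter_subset_inter_right _ h
  | .choice γ₁ γ₂, Ω, D₁, D₂, h => by
      simp only [GLG.sem]
      exact union_subset_union (glg_sem_mono γ₁ Ω h) (glg_sem_mono γ₂ Ω h)
  | .seq γ₁ γ₂, Ω, D₁, D₂, h => by
      simp only [GLG.sem]
      exact glg_sem_mono γ₁ Ω (glg_sem_mono γ₂ Ω h)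
  | .star γ, Ω, D₁, D₂, h => by
      simp only [GLG.sem]
      apply sInter_subset_sInter
      intro Z hZ
      exact union_subset_iff.mpr
        ⟨h.trans (union_subset_iff.mp hZ).1, (union_subset_iff.mp hZ).2⟩
  | .dual γ, Ω, D₁, D₂, h => by
      simp only [GLG.sem]
      exact compl_subset_compl.mpr (glg_sem_mono γ Ω (compl_subset_compl.mpr h))

/-! ### Fixpoint lemmas -/

lemma lfp_le {α : Type*} {G : Set α → Set α} {Z : Set α} (h : G Z ⊆ Z) :
    ⋂₀ {Z | G Z ⊆ Z} ⊆ Z := sInter_subset_of_mem h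

lemma lfp_fix {α : Type*} {G : Set α → Set α}
    (hG : ∀ ⦃A B : Set α⦄, A ⊆ B → G A ⊆ G B) :
    G (⋂₀ {Z | G Z ⊆ Z}) = ⋂₀ {Z | G Z ⊆ Z} := by
  have h1 : G (⋂₀ {Z | G Z ⊆ Z}) ⊆ ⋂₀ {Z | G Z ⊆ Z} := by
    apply subset_sInter
    intro Z hZ
    exact (hG (lfp_le hZ)).trans hZ
  exact h1.antisymm (lfp_le (hG h1))

lemma le_gfp {α : Type*} {H : Set α → Set α} {Y : Set α} (h : Y ⊆ H Y) :
    Y ⊆ ⋃₀ {Y | Y ⊆ H Y} := subset_sUnion_of_mem h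

lemma gfp_fix {α : Type*} {H : Set α → Set α}
    (hH : ∀ ⦃A B : Set α⦄, A ⊆ B → H A ⊆ H B) :
    H (⋃₀ {Y | Y ⊆ H Y}) = ⋃₀ {Y | Y ⊆ H Y} := by
  have h1 : ⋃₀ {Y | Y ⊆ H Y} ⊆ H (⋃₀ {Y | Y ⊆ H Y}) := by
    apply sUnion_subset
    intro Y hY
    exact hY.trans (hH (le_gfp hY))
  exact (le_gfp (hH h1)).antisymm h1

/-! ### Monotonicity of μ-calculus semantics -/

theorem mu_sem_mono (X : V ⊕ V) :
    ∀ (φ : MuF L 𝒳 Act V), bar X ∉ φ.mentions →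
    ∀ (Ω : V → Set (𝒳 → M)) ⦃E F : Set (𝒳 → M)⦄, E ⊆ F →
      φ.sem tr (modif Ω X E) ⊆ φ.sem tr (modif Ω X F) := by
  intro φ
  induction φ with
  | lit p => intro _ Ω E F h; simp [MuF.sem]
  | var Y =>
      intro hY Ω E F h
      simp only [MuF.mentions, mem_singleton_iff] at hY
      simp only [MuF.sem, barVal_modif]
      by_cases h1 : Y = X
      · simp [h1, h]
      · rw [if_neg h1, if_neg (by rintro rfl; exact hY rfl), if_neg h1,
          if_neg (by rintro rfl; exact hY rfl)]
  | or φ ψ ihφ ihψ =>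
      intro hY Ω E F h
      simp only [MuF.mentions, mem_union, not_or] at hY
      exact union_subset_union (ihφ hY.1 Ω h) (ihψ hY.2 Ω h)
  | and φ ψ ihφ ihψ =>
      intro hY Ω E F h
      simp only [MuF.mentions, mem_union, not_or] at hY
      exact inter_subset_inter (ihφ hY.1 Ω h) (ihψ hY.2 Ω h)
  | dia a φ ih =>
      intro hY Ω E F h ω hω
      obtain ⟨ν, h1, h2⟩ := hω
      exact ⟨ν, h1, ih hY Ω h h2⟩
  | box a φ ih =>
      intro hY Ω E F h ω hω ν hν
      exact ih hY Ω h (hω ν hν)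
  | mu Y φ ih =>
      intro hY Ω E F h
      simp only [MuF.mentions, mem_union, mem_singleton_iff, not_or] at hY
      simp only [MuF.sem]
      by_cases hxy : unbar X = unbar Y
      · simp only [modif_modif_same hxy]
        exact subset_rfl
      · apply sInter_subset_sInter
        intro Z hZ
        rw [mem_setOf_eq, modif_comm hxy] at hZ ⊢
        exact (ih hY.2 (modif Ω Y Z) h).trans hZ
  | nu Y φ ih =>
      intro hY Ω E F h
      simp only [MuF.mentions, mem_union, mem_singleton_iff, not_or] at hY
      simp only [MuF.sem]
      by_cases hxy : unbar X = unbar Y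
      · simp only [modif_modif_same hxy]
        exact subset_rfl
      · apply sUnion_subset_sUnion
        intro Z hZ
        rw [mem_setOf_eq, modif_comm hxy] at hZ ⊢
        exact hZ.trans (ih hY.2 (modif Ω Y Z) h)

/-! ### Independence of the control variable -/

/-- A set of states independent of the variable `ℓ`. -/
def IndepSet (ℓ : 𝒳) (S : Set (𝒳 → M)) : Prop :=
  ∀ (b : M) (ω : 𝒳 → M), ω ∈ S ↔ Function.update ω ℓ b ∈ S

lemma IndepSet.compl {ℓ : 𝒳} {S : Set (𝒳 → M)} (h : IndepSet ℓ S) : IndepSet ℓ Sᶜ :=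
  fun b ω => not_congr (h b ω)

lemma indepVal_modif {ℓ : 𝒳} {Ω : V → Set (𝒳 → M)} (hΩ : IndepVal ℓ Ω)
    {X : V ⊕ V} {E : Set (𝒳 → M)} (hE : IndepSet ℓ E) : IndepVal ℓ (modif Ω X E) := by
  cases X with
  | inl x =>
      intro Y b ω
      by_cases h : Y = x
      · subst h; simp only [modif, Function.update_self]; exact hE b ω
      · simp only [modif, Function.update_of_ne h]; exact hΩ Y b ω
  | inr x =>
      intro Y b ω
      by_cases h : Y = x
      · subst h; simp only [modif, Function.update_self]; exact hE.compl b ω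
      · simp only [modif, Function.update_of_ne h]; exact hΩ Y b ω

theorem mu_sem_indep {ℓ : 𝒳} :
    ∀ (φ : MuF L 𝒳 Act V), φ.WF → ℓ ∉ φ.ovars →
      (∀ a ∈ φ.acts, IndepAct tr ℓ a) →
      ∀ (Ω : V → Set (𝒳 → M)), IndepVal ℓ Ω → IndepSet ℓ (φ.sem tr Ω) := by
  intro φ
  induction φ with
  | lit p =>
      intro _ hℓ _ Ω _ b ω
      exact lit_sem_update hℓ b ω
  | var X =>
      intro _ _ _ Ω hΩ b ω
      cases X with
      | inl x => exact hΩ x b ω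
      | inr x => exact not_congr (hΩ x b ω)
  | or φ ψ ihφ ihψ =>
      intro hWF hℓ hind Ω hΩ b ω
      simp only [MuF.ovars, mem_union, not_or] at hℓ
      have h1 := ihφ hWF.1 hℓ.1 (fun a ha => hind a (Or.inl ha)) Ω hΩ b ω
      have h2 := ihψ hWF.2 hℓ.2 (fun a ha => hind a (Or.inr ha)) Ω hΩ b ω
      simp only [MuF.sem, mem_union]
      exact or_congr h1 h2
  | and φ ψ ihφ ihψ =>
      intro hWF hℓ hind Ω hΩ b ω
      simp only [MuF.ovars, mem_union, not_or] at hℓ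
      have h1 := ihφ hWF.1 hℓ.1 (fun a ha => hind a (Or.inl ha)) Ω hΩ b ω
      have h2 := ihψ hWF.2 hℓ.2 (fun a ha => hind a (Or.inr ha)) Ω hΩ b ω
      simp only [MuF.sem, mem_inter_iff]
      exact and_congr h1 h2
  | dia a φ ih =>
      intro hWF hℓ hind Ω hΩ b ω
      have ha : IndepAct tr ℓ a := hind a (Or.inl rfl)
      have ihφ := ih hWF hℓ (fun a' ha' => hind a' (Or.inr ha')) Ω hΩ
      simp only [MuF.sem, mem_setOf_eq]
      constructor
      · rintro ⟨ν, h1, h2⟩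
        exact ⟨Function.update ν ℓ b, ha b ω ν h1, (ihφ b ν).mp h2⟩
      · rintro ⟨ν, h1, h2⟩
        refine ⟨Function.update ν ℓ (ω ℓ), ?_, (ihφ (ω ℓ) ν).mp h2⟩
        have := ha (ω ℓ) _ _ h1
        rwa [Function.update_idem, Function.update_eq_self] at this
  | box a φ ih =>
      intro hWF hℓ hind Ω hΩ b ω
      have ha : IndepAct tr ℓ a := hind a (Or.inl rfl)
      have ihφ := ih hWF hℓ (fun a' ha' => hind a' (Or.inr ha')) Ω hΩ
      simp only [MuF.sem, mem_setOf_eq]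
      constructor
      · intro h ν hν
        have := ha (ω ℓ) _ _ hν
        rw [Function.update_idem, Function.update_eq_self] at this
        exact (ihφ (ω ℓ) ν).mpr (h _ this)
      · intro h ν hν
        exact (ihφ b ν).mpr (h _ (ha b ω ν hν))
  | mu X φ ih =>
      intro hWF hℓ hind Ω hΩ
      have hbar : bar X ∉ φ.mentions := hWF.1
      have ihφ : ∀ (E : Set (𝒳 → M)), IndepSet ℓ E →
          IndepSet ℓ (φ.sem tr (modif Ω X E)) :=
        fun E hE => ih hWF.2 hℓ hind _ (indepVal_modif hΩ hE)
      -- the ℓ-independent core of a prefixpoint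
      have hcore : ∀ E : Set (𝒳 → M), φ.sem tr (modif Ω X E) ⊆ E →
          ∃ E' : Set (𝒳 → M), IndepSet ℓ E' ∧ E' ⊆ E ∧
            φ.sem tr (modif Ω X E') ⊆ E' := by
        intro E hE
        refine ⟨{ω | ∀ b : M, Function.update ω ℓ b ∈ E}, ?_, ?_, ?_⟩
        · intro b ω
          constructor
          · intro h b'
            rw [Function.update_idem]; exact h b'
          · intro h b'
            have := h b'
            rwa [Function.update_idem] at this
        · intro ω hω
          have := hω (ω ℓ)
          rwa [Function.update_eq_self] at this
        · intro ω hω b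
          have hsub : φ.sem tr (modif Ω X {ω | ∀ b : M, Function.update ω ℓ b ∈ E})
              ⊆ E := by
            refine (mu_sem_mono X φ hbar Ω ?_).trans hE
            intro ν hν
            have := hν (ν ℓ)
            rwa [Function.update_eq_self] at this
          have hI : IndepSet ℓ (φ.sem tr
              (modif Ω X {ω | ∀ b : M, Function.update ω ℓ b ∈ E})) := by
            apply ihφ
            intro b' ω'
            constructor
            · intro h b''; rw [Function.update_idem]; exact h b''
            · intro h b''; have := h b''; rwa [Function.update_idem] at this
          exact hsub ((hI b ω).mp hω)
      intro b ω
      simp only [MuF.sem, mem_sInter]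
      constructor
      · intro h Z hZ
        obtain ⟨Z', hI, hsub, hpre⟩ := hcore Z hZ
        exact hsub ((hI b ω).mp (h Z' hpre))
      · intro h Z hZ
        obtain ⟨Z', hI, hsub, hpre⟩ := hcore Z hZ
        exact hsub ((hI b ω).mpr (h Z' hpre))
  | nu X φ ih =>
      intro hWF hℓ hind Ω hΩ
      have hbar : bar X ∉ φ.mentions := hWF.1
      have ihφ : ∀ (E : Set (𝒳 → M)), IndepSet ℓ E →
          IndepSet ℓ (φ.sem tr (modif Ω X E)) :=
        fun E hE => ih hWF.2 hℓ hind _ (indepVal_modif hΩ hE)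
      -- the ℓ-independent hull of a postfixpoint
      have hhull : ∀ E : Set (𝒳 → M), E ⊆ φ.sem tr (modif Ω X E) →
          ∃ E' : Set (𝒳 → M), IndepSet ℓ E' ∧ E ⊆ E' ∧
            E' ⊆ φ.sem tr (modif Ω X E') := by
        intro E hE
        have hEsub : E ⊆ {ω | ∃ b : M, Function.update ω ℓ b ∈ E} := by
          intro ω hω
          exact ⟨ω ℓ, by rwa [Function.update_eq_self]⟩
        have hI' : IndepSet ℓ {ω | ∃ b : M, Function.update ω ℓ b ∈ E} := by
          intro b ω
          constructor
          · rintro ⟨b', hb'⟩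
            exact ⟨b', by rwa [Function.update_idem]⟩
          · rintro ⟨b', hb'⟩
            rw [Function.update_idem] at hb'
            exact ⟨b', hb'⟩
        refine ⟨{ω | ∃ b : M, Function.update ω ℓ b ∈ E}, hI', hEsub, ?_⟩
        intro ω hω
        obtain ⟨b, hb⟩ := hω
        have h1 : Function.update ω ℓ b ∈
            φ.sem tr (modif Ω X {ω | ∃ b : M, Function.update ω ℓ b ∈ E}) :=
          mu_sem_mono X φ hbar Ω hEsub (hE hb)
        exact (ihφ _ hI' b ω).mpr h1
      intro b ω
      simp only [MuF.sem, mem_sUnion]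
      constructor
      · rintro ⟨Z, hZ, hω⟩
        obtain ⟨Z', hI, hsub, hpost⟩ := hhull Z hZ
        exact ⟨Z', hpost, (hI b ω).mp (hsub hω)⟩
      · rintro ⟨Z, hZ, hω⟩
        obtain ⟨Z', hI, hsub, hpost⟩ := hhull Z hZ
        exact ⟨Z', hpost, (hI b ω).mpr (hsub hω)⟩

/-! ### Irrelevance of the translated game on dictionary-true variables -/

lemma modif_apply_ne {X : V ⊕ V} {y : V} (h : unbar X ≠ y) (Ω : V → Set (𝒳 → M))
    (E : Set (𝒳 → M)) : modif Ω X E y = Ω y := by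
  cases X <;> exact Function.update_of_ne (fun hh => h hh.symm) _ _

lemma dictUp_true {ϑ : V → Bool} {X Y : V ⊕ V} (h : ϑ (unbar X) = true) :
    dictUp ϑ Y (unbar X) = true := by
  by_cases hxy : unbar X = unbar Y
  · rw [dictUp, hxy]; exact Function.update_self _ _ _
  · simpa [dictUp, Function.update_of_ne hxy] using h

theorem trGame_sem_modif {ℓ : 𝒳} {c : V ⊕ V → L.Constants} {asn : 𝒳 → L.Term 𝒳 → Act} :
    ∀ (φ : MuF L 𝒳 Act V) (ϑ : V → Bool) (X : V ⊕ V), ϑ (unbar X) = true →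
    ∀ (Ω : V → Set (𝒳 → M)) (E D : Set (𝒳 → M)),
      (trGame ℓ c asn φ ϑ).sem tr (modif Ω X E) D
        = (trGame ℓ c asn φ ϑ).sem tr Ω D := by
  intro φ
  induction φ with
  | lit p =>
      intro ϑ X hX Ω E D
      simp [trGame, GLG.sem, GLF.sem, glFalse]
  | var Y =>
      intro ϑ X hX Ω E D
      by_cases hY : ϑ (unbar Y) = true
      · simp [trGame, hY, GLG.sem]
      · have hne : unbar X ≠ unbar Y := fun h => hY (h ▸ hX)
        cases Y with
        | inl y =>
            simp [trGame, hY, GLG.sem, GLF.sem, gvar, glFalse,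
              modif_apply_ne (X := X) (y := y) hne Ω E]
        | inr y =>
            simp [trGame, hY, GLG.sem, GLF.sem, gvar, glFalse,
              modif_apply_ne (X := X) (y := y) hne Ω E]
  | or φ ψ ihφ ihψ =>
      intro ϑ X hX Ω E D
      simp only [trGame, GLG.sem, ihφ ϑ X hX Ω E D, ihψ ϑ X hX Ω E D]
  | and φ ψ ihφ ihψ =>
      intro ϑ X hX Ω E D
      simp only [trGame, GLG.dchoice, GLG.sem, ihφ ϑ X hX Ω E Dᶜᶜ, ihψ ϑ X hX Ω E Dᶜᶜ]
  | dia a φ ih =>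
      intro ϑ X hX Ω E D
      simp only [trGame, GLG.sem, ih ϑ X hX Ω E D]
  | box a φ ih =>
      intro ϑ X hX Ω E D
      simp only [trGame, GLG.sem, ih ϑ X hX Ω E D]
  | mu Y φ ih =>
      intro ϑ X hX Ω E D
      have hrw := ih (dictUp ϑ Y) X (dictUp_true hX) Ω E
      simp only [trGame, GLG.sem, GLF.sem, hrw]
  | nu Y φ ih =>
      intro ϑ X hX Ω E D
      have hrw := ih (dictUp ϑ Y) X (dictUp_true hX) Ω E
      simp only [trGame, GLG.cross, GLG.sem, GLF.sem, hrw]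

/-! ### Bookkeeping for bound variables and dictionaries -/

lemma unbar_eq_cases {X Y : V ⊕ V} (h : unbar Y = unbar X) : Y = X ∨ Y = bar X := by
  cases X <;> cases Y <;> simp only [unbar, Sum.elim_inl, Sum.elim_inr, id_eq] at h <;>
    subst h <;> simp [bar]

lemma boundVars_mem_boundList {φ : MuF L 𝒳 Act V} {Y : V ⊕ V} (h : Y ∈ φ.boundVars) :
    unbar Y ∈ φ.boundList.map unbar := by
  induction φ with
  | lit p => simp [MuF.boundVars] at h
  | var X => simp [MuF.boundVars] at h
  | or φ ψ ihφ ihψ =>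
      rcases h with h | h
      · simp only [MuF.boundList, List.map_append, List.mem_append]; exact Or.inl (ihφ h)
      · simp only [MuF.boundList, List.map_append, List.mem_append]; exact Or.inr (ihψ h)
  | and φ ψ ihφ ihψ =>
      rcases h with h | h
      · simp only [MuF.boundList, List.map_append, List.mem_append]; exact Or.inl (ihφ h)
      · simp only [MuF.boundList, List.map_append, List.mem_append]; exact Or.inr (ihψ h)
  | dia a φ ih => exact ih h
  | box a φ ih => exact ih h
  | mu X φ ih =>
      rcases h with h | h
      · simp only [mem_singleton_iff] at h
        subst h; simp [MuF.boundList]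
      · simp only [MuF.boundList, List.map_cons, List.mem_cons]; exact Or.inr (ih h)
  | nu X φ ih =>
      rcases h with h | h
      · simp only [mem_singleton_iff] at h
        subst h; simp [MuF.boundList]
      · simp only [MuF.boundList, List.map_cons, List.mem_cons]; exact Or.inr (ih h)

lemma compat_dictUp_mu {ϑ : V → Bool} {X : V ⊕ V} {φ : MuF L 𝒳 Act V}
    (hcomp : Compat ϑ (MuF.mu X φ)) (hBO : (MuF.mu X φ).BoundOnce) :
    Compat (dictUp ϑ X) φ := by
  intro Y hY
  have h1 : unbar X ∉ φ.boundList.map unbar := by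
    have := hBO
    simp only [MuF.BoundOnce, MuF.boundList, List.map_cons, List.nodup_cons] at this
    exact this.1
  have h2 : unbar Y ≠ unbar X := fun h => h1 (h ▸ boundVars_mem_boundList hY)
  rw [dictUp, Function.update_of_ne h2]
  exact hcomp Y (Or.inr hY)

lemma compat_dictUp_nu {ϑ : V → Bool} {X : V ⊕ V} {φ : MuF L 𝒳 Act V}
    (hcomp : Compat ϑ (MuF.nu X φ)) (hBO : (MuF.nu X φ).BoundOnce) :
    Compat (dictUp ϑ X) φ := by
  intro Y hY
  have h1 : unbar X ∉ φ.boundList.map unbar := by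
    have := hBO
    simp only [MuF.BoundOnce, MuF.boundList, List.map_cons, List.nodup_cons] at this
    exact this.1
  have h2 : unbar Y ≠ unbar X := fun h => h1 (h ▸ boundVars_mem_boundList hY)
  rw [dictUp, Function.update_of_ne h2]
  exact hcomp Y (Or.inr hY)

lemma compl_sInter' (SS : Set (Set (𝒳 → M))) :
    (⋂₀ SS)ᶜ = ⋃₀ {Y | Yᶜ ∈ SS} := by
  ext ω
  simp only [mem_compl_iff, mem_sInter, not_forall, mem_sUnion, mem_setOf_eq]
  constructor
  · rintro ⟨Z, hZ, hω⟩
    exact ⟨Zᶜ, by rwa [compl_compl], hω⟩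
  · rintro ⟨Y, hY, hω⟩
    exact ⟨Yᶜ, hY, by simpa using hω⟩

/-! ### The main induction -/

theorem counter_aux {ℓ : 𝒳} {c : V ⊕ V → L.Constants} {asn : 𝒳 → L.Term 𝒳 → Act}
    (hasn : ∀ (x : 𝒳) (θ : L.Term 𝒳) (ω ν : 𝒳 → M),
      tr (asn x θ) ω ν ↔ ν = Function.update ω x (θ.realize ω))
    (hc : ∀ (X Y : V ⊕ V), X ≠ Y → ∀ ω : 𝒳 → M,
      (Language.Constants.term (c X) : L.Term 𝒳).realize ω
        ≠ (Language.Constants.term (c Y) : L.Term 𝒳).realize ω) :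
    ∀ (φ : MuF L 𝒳 Act V), φ.WF → φ.BoundOnce → ℓ ∉ φ.ovars →
      (∀ a ∈ φ.acts, IndepAct tr ℓ a) →
      ∀ (Ω : V → Set (𝒳 → M)), IndepVal ℓ Ω → ∀ (ϑ : V → Bool), Compat ϑ φ →
      ∀ (D : Set (𝒳 → M)),
      (∀ X ∈ φ.mentions, ϑ (unbar X) = true → ∀ ω : 𝒳 → M,
        (Function.update ω ℓ ((Language.Constants.term (c X) : L.Term 𝒳).realize ω) ∈ D
          ↔ ω ∈ barVal Ω X)) →
      φ.sem tr Ω = (trGame ℓ c asn φ ϑ).sem tr Ω D := by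
  intro φ
  induction φ with
  | lit p =>
      intro _ _ _ _ Ω _ ϑ _ D _
      ext ω
      simp [MuF.sem, trGame, GLG.sem, GLF.sem, glFalse, Lit.sem, Language.Term.realize]
  | var Y =>
      intro _ _ _ _ Ω _ ϑ _ D hstar
      by_cases hY : ϑ (unbar Y) = true
      · ext ω
        simp only [MuF.sem, trGame, hY, if_true, GLG.sem, mem_setOf_eq]
        constructor
        · rintro hω
          refine ⟨_, (hasn ℓ _ ω _).mpr rfl, ?_⟩
          exact (hstar Y rfl hY ω).mpr hω
        · rintro ⟨ν, h1, h2⟩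
          rw [hasn] at h1
          subst h1
          exact (hstar Y rfl hY ω).mp h2
      · cases Y with
        | inl y =>
            ext ω
            simp [MuF.sem, trGame, hY, GLG.sem, GLF.sem, gvar, glFalse, Lit.sem,
              Language.Term.realize, barVal]
        | inr y =>
            ext ω
            simp [MuF.sem, trGame, hY, GLG.sem, GLF.sem, gvar, glFalse, Lit.sem,
              Language.Term.realize, barVal]
  | or φ ψ ihφ ihψ =>
      intro hWF hBO hℓ hind Ω hΩ ϑ hcomp D hstar
      have hBO' : φ.BoundOnce ∧ ψ.BoundOnce := by
        have := hBO
        simp only [MuF.BoundOnce, MuF.boundList, List.map_append] at this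
        exact ⟨this.of_append_left, this.of_append_right⟩
      simp only [MuF.ovars, mem_union, not_or] at hℓ
      have e1 := ihφ hWF.1 hBO'.1 hℓ.1 (fun a ha => hind a (Or.inl ha)) Ω hΩ ϑ
            (fun Z hZ => hcomp Z (Or.inl hZ)) D
            (fun Z hZ => hstar Z (Or.inl hZ))
      have e2 := ihψ hWF.2 hBO'.2 hℓ.2 (fun a ha => hind a (Or.inr ha)) Ω hΩ ϑ
            (fun Z hZ => hcomp Z (Or.inr hZ)) D
            (fun Z hZ => hstar Z (Or.inr hZ))
      simp only [MuF.sem, trGame, GLG.sem, e1, e2]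
  | and φ ψ ihφ ihψ =>
      intro hWF hBO hℓ hind Ω hΩ ϑ hcomp D hstar
      have hBO' : φ.BoundOnce ∧ ψ.BoundOnce := by
        have := hBO
        simp only [MuF.BoundOnce, MuF.boundList, List.map_append] at this
        exact ⟨this.of_append_left, this.of_append_right⟩
      simp only [MuF.ovars, mem_union, not_or] at hℓ
      have e1 := ihφ hWF.1 hBO'.1 hℓ.1 (fun a ha => hind a (Or.inl ha)) Ω hΩ ϑ
            (fun Z hZ => hcomp Z (Or.inl hZ)) D
            (fun Z hZ => hstar Z (Or.inl hZ))
      have e2 := ihψ hWF.2 hBO'.2 hℓ.2 (fun a ha => hind a (Or.inr ha)) Ω hΩ ϑ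
            (fun Z hZ => hcomp Z (Or.inr hZ)) D
            (fun Z hZ => hstar Z (Or.inr hZ))
      simp only [MuF.sem, trGame, GLG.dchoice, GLG.sem, compl_compl, compl_union,
        e1, e2]
  | dia a φ ih =>
      intro hWF hBO hℓ hind Ω hΩ ϑ hcomp D hstar
      have e := ih hWF hBO hℓ (fun a' ha' => hind a' (Or.inr ha')) Ω hΩ ϑ hcomp D hstar
      simp only [MuF.sem, trGame, GLG.sem, e]
  | box a φ ih =>
      intro hWF hBO hℓ hind Ω hΩ ϑ hcomp D hstar
      have e := ih hWF hBO hℓ (fun a' ha' => hind a' (Or.inr ha')) Ω hΩ ϑ hcomp D hstar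
      ext ω
      simp only [MuF.sem, trGame, GLG.sem, e, mem_setOf_eq, mem_compl_iff, not_exists,
        not_and]
      constructor
      · intro h ν hν
        exact fun hh => hh (h ν hν)
      · intro h ν hν
        by_contra hh
        exact h ν hν hh
  | mu X φ ih =>
      intro hWF hBO hℓ hind Ω hΩ ϑ hcomp D hstar
      classical
      obtain ⟨hbar, hWFφ⟩ := hWF
      have hBOφ : φ.BoundOnce := by
        have := hBO
        simp only [MuF.BoundOnce, MuF.boundList, List.map_cons, List.nodup_cons] at this
        exact this.2
      have hcomp' : Compat (dictUp ϑ X) φ := compat_dictUp_mu hcomp hBO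
      have hϑ'X : dictUp ϑ X (unbar X) = true := by
        simp [dictUp]
      -- abbreviations
      set val : (𝒳 → M) → M :=
        fun ω => (Language.Constants.term (c X) : L.Term 𝒳).realize ω with hval
      set upd : (𝒳 → M) → (𝒳 → M) := fun ω => Function.update ω ℓ (val ω) with hupd
      have hvalc : ∀ ω ω' : 𝒳 → M, val ω = val ω' := fun ω ω' => realize_const (c X) ω ω'
      set P : Set (𝒳 → M) := (Lit.eq (L := L) (Language.Term.var ℓ)
        (Language.Constants.term (c X))).sem (M := M) with hPdef
      set N : Set (𝒳 → M) := (Lit.ne (L := L) (Language.Term.var ℓ)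
        (Language.Constants.term (c X))).sem (M := M) with hNdef
      set g := trGame ℓ c asn φ (dictUp ϑ X) with hg
      set W := ⋂₀ {Z : Set (𝒳 → M) | (N ∩ D) ∪ (P ∩ g.sem tr Ω Z) ⊆ Z} with hW
      set Estar := ⋂₀ {E : Set (𝒳 → M) | MuF.sem tr φ (modif Ω X E) ⊆ E} with hEstar
      set F := {ω : 𝒳 → M | upd ω ∈ W} with hF
      -- membership facts
      have hupdXP : ∀ ω : 𝒳 → M, upd ω ∈ P := by
        intro ω
        show (Function.update ω ℓ (val ω)) ℓ
            = (Language.Constants.term (c X)).realize (Function.update ω ℓ (val ω))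
        rw [Function.update_self]
        exact hvalc ω _
      have hupdYN : ∀ (Y : V ⊕ V), Y ≠ X → ∀ ω : 𝒳 → M,
          Function.update ω ℓ ((Language.Constants.term (c Y) : L.Term 𝒳).realize ω) ∈ N := by
        intro Y hYX ω
        show ¬ (Function.update ω ℓ ((Language.Constants.term (c Y) : L.Term 𝒳).realize ω)) ℓ
            = (Language.Constants.term (c X)).realize
                (Function.update ω ℓ ((Language.Constants.term (c Y)).realize ω))
        rw [Function.update_self]
        intro h
        exact hc Y X hYX ω (h.trans (realize_const (c X) _ ω))
      have hNnotP : ∀ ω : 𝒳 → M, ω ∈ N → ω ∉ P := fun ω h => h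
      have hPnotN : ∀ ω : 𝒳 → M, ω ∈ P → ω ∉ N := fun ω h hh => hh h
      -- the RHS as a preimage of W
      have hRHS : (trGame ℓ c asn (MuF.mu X φ) ϑ).sem tr Ω D = F := by
        rw [hF, hW, hg, hPdef, hNdef]
        simp only [trGame, GLG.sem, GLF.sem]
        ext ω
        simp only [mem_setOf_eq]
        constructor
        · rintro ⟨ν, h1, h2⟩
          rw [hasn] at h1
          subst h1
          exact h2
        · intro h
          exact ⟨_, (hasn _ _ _ _).mpr rfl, h⟩
      -- properties of the μ-calculus fixpoint
      have hEindep : IndepSet ℓ Estar :=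
        mu_sem_indep (tr := tr) (MuF.mu X φ) ⟨hbar, hWFφ⟩ hℓ hind Ω hΩ
      have hEpre : MuF.sem tr φ (modif Ω X Estar) ⊆ Estar :=
        (lfp_fix (G := fun E => MuF.sem tr φ (modif Ω X E))
          (fun A B h => mu_sem_mono X φ hbar Ω h)).le
      -- instantiating the induction hypothesis
      have hother : ∀ (Y : V ⊕ V), Y ∈ φ.mentions → Y ≠ X → dictUp ϑ X (unbar Y) = true →
          Y ≠ bar X ∧ ϑ (unbar Y) = true ∧
          (∀ ω : 𝒳 → M,
            Function.update ω ℓ ((Language.Constants.term (c Y) : L.Term 𝒳).realize ω) ∈ D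
              ↔ ω ∈ barVal Ω Y) := by
        intro Y hYm hYX hYt
        have hYbar : Y ≠ bar X := fun h => hbar (h ▸ hYm)
        have hunbar : unbar Y ≠ unbar X := by
          intro h
          rcases unbar_eq_cases h with h | h
          · exact hYX h
          · exact hYbar h
        have hϑY : ϑ (unbar Y) = true := by
          rwa [dictUp, Function.update_of_ne hunbar] at hYt
        exact ⟨hYbar, hϑY, hstar Y (Or.inr hYm) hϑY⟩
      have hIH : ∀ (E DD : Set (𝒳 → M)), IndepSet ℓ E →
          (∀ ω : 𝒳 → M, upd ω ∈ DD ↔ ω ∈ E) →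
          (∀ (Y : V ⊕ V), Y ∈ φ.mentions → Y ≠ X → dictUp ϑ X (unbar Y) = true →
            ∀ ω : 𝒳 → M,
              Function.update ω ℓ ((Language.Constants.term (c Y) : L.Term 𝒳).realize ω) ∈ DD
                ↔ ω ∈ barVal Ω Y) →
          MuF.sem tr φ (modif Ω X E) = g.sem tr Ω DD := by
        intro E DD hEind hDX hDY
        have h1 := ih hWFφ hBOφ hℓ hind (modif Ω X E) (indepVal_modif hΩ hEind)
          (dictUp ϑ X) hcomp' DD ?_
        · rw [hg]
          exact h1.trans (trGame_sem_modif φ (dictUp ϑ X) X hϑ'X Ω E DD)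
        · intro Y hYm hYt ω
          by_cases hYX : Y = X
          · subst hYX
            rw [barVal_modif, if_pos rfl]
            exact hDX ω
          · obtain ⟨hYbar, _, _⟩ := hother Y hYm hYX hYt
            rw [barVal_modif, if_neg hYX, if_neg hYbar]
            exact hDY Y hYm hYX hYt ω
      -- the candidate prefixpoint Z*
      set Zs := (N ∩ D) ∪ (P ∩ Estar) with hZs
      have hZsX : ∀ ω : 𝒳 → M, upd ω ∈ Zs ↔ ω ∈ Estar := by
        intro ω
        rw [hZs]
        simp only [mem_union, mem_inter_iff]
        constructor
        · rintro (⟨h1, _⟩ | ⟨_, h2⟩)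
          · exact absurd (hupdXP ω) (hNnotP _ h1)
          · exact (hEindep (val ω) ω).mpr h2
        · intro h
          exact Or.inr ⟨hupdXP ω, (hEindep (val ω) ω).mp h⟩
      have hZsY : ∀ (Y : V ⊕ V), Y ∈ φ.mentions → Y ≠ X → dictUp ϑ X (unbar Y) = true →
          ∀ ω : 𝒳 → M,
            Function.update ω ℓ ((Language.Constants.term (c Y) : L.Term 𝒳).realize ω) ∈ Zs
              ↔ ω ∈ barVal Ω Y := by
        intro Y hYm hYX hYt ω
        obtain ⟨_, _, hD⟩ := hother Y hYm hYX hYt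
        have hN := hupdYN Y hYX ω
        rw [hZs]
        simp only [mem_union, mem_inter_iff]
        constructor
        · rintro (⟨_, h2⟩ | ⟨h1, _⟩)
          · exact (hD ω).mp h2
          · exact absurd h1 (hNnotP _ hN)
        · intro h
          exact Or.inl ⟨hN, (hD ω).mpr h⟩
      have hIH1 : MuF.sem tr φ (modif Ω X Estar) = g.sem tr Ω Zs :=
        hIH Estar Zs hEindep hZsX hZsY
      -- W ⊆ Z*
      have hWZs : W ⊆ Zs := by
        rw [hW]
        refine sInter_subset_of_mem ?_
        show (N ∩ D) ∪ (P ∩ g.sem tr Ω Zs) ⊆ Zs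
        apply union_subset
        · rw [hZs]; exact subset_union_left
        · rw [← hIH1, hZs]
          exact subset_union_right.trans'
            (inter_subset_inter_right _ hEpre)
      have hdir1 : F ⊆ Estar := fun ω hω => (hZsX ω).mp (hWZs hω)
      -- W is a fixpoint
      have hWfix : (N ∩ D) ∪ (P ∩ g.sem tr Ω W) = W :=
        lfp_fix (G := fun Z => (N ∩ D) ∪ (P ∩ g.sem tr Ω Z))
          (fun A B h => union_subset_union_right _
            (inter_subset_inter_right _ (glg_sem_mono _ Ω h)))
      -- F is ℓ-independent
      have hFupd : ∀ (b : M) (ω : 𝒳 → M), upd (Function.update ω ℓ b) = upd ω := by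
        intro b ω
        show Function.update (Function.update ω ℓ b) ℓ (val (Function.update ω ℓ b))
            = Function.update ω ℓ (val ω)
        rw [Function.update_idem, hvalc (Function.update ω ℓ b) ω]
      have hFind : IndepSet ℓ F := by
        intro b ω
        rw [hF]
        simp only [mem_setOf_eq, hFupd]
      have hWX : ∀ ω : 𝒳 → M, upd ω ∈ W ↔ ω ∈ F := fun ω => Iff.rfl
      have hWY : ∀ (Y : V ⊕ V), Y ∈ φ.mentions → Y ≠ X → dictUp ϑ X (unbar Y) = true →
          ∀ ω : 𝒳 → M,
            Function.update ω ℓ ((Language.Constants.term (c Y) : L.Term 𝒳).realize ω) ∈ W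
              ↔ ω ∈ barVal Ω Y := by
        intro Y hYm hYX hYt ω
        obtain ⟨_, _, hD⟩ := hother Y hYm hYX hYt
        have hN := hupdYN Y hYX ω
        rw [← hWfix]
        simp only [mem_union, mem_inter_iff]
        constructor
        · rintro (⟨_, h2⟩ | ⟨h1, _⟩)
          · exact (hD ω).mp h2
          · exact absurd h1 (hNnotP _ hN)
        · intro h
          exact Or.inl ⟨hN, (hD ω).mpr h⟩
      have hIH2 : MuF.sem tr φ (modif Ω X F) = g.sem tr Ω W :=
        hIH F W hFind hWX hWY
      have hTind : IndepSet ℓ (MuF.sem tr φ (modif Ω X F)) :=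
        mu_sem_indep φ hWFφ hℓ hind _ (indepVal_modif hΩ hFind)
      have hFpre : MuF.sem tr φ (modif Ω X F) ⊆ F := by
        intro ω hω
        have h2 : upd ω ∈ MuF.sem tr φ (modif Ω X F) := (hTind (val ω) ω).mp hω
        rw [hIH2] at h2
        have h3 : upd ω ∈ (N ∩ D) ∪ (P ∩ g.sem tr Ω W) := Or.inr ⟨hupdXP ω, h2⟩
        rw [hWfix] at h3
        exact h3
      have hdir2 : Estar ⊆ F := by
        rw [hEstar]
        exact sInter_subset_of_mem hFpre
      rw [hRHS]
      show Estar = F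
      exact Subset.antisymm hdir2 hdir1
  | nu X φ ih =>
      intro hWF hBO hℓ hind Ω hΩ ϑ hcomp D hstar
      classical
      obtain ⟨hbar, hWFφ⟩ := hWF
      have hBOφ : φ.BoundOnce := by
        have := hBO
        simp only [MuF.BoundOnce, MuF.boundList, List.map_cons, List.nodup_cons] at this
        exact this.2
      have hcomp' : Compat (dictUp ϑ X) φ := compat_dictUp_nu hcomp hBO
      have hϑ'X : dictUp ϑ X (unbar X) = true := by
        simp [dictUp]
      set val : (𝒳 → M) → M :=
        fun ω => (Language.Constants.term (c X) : L.Term 𝒳).realize ω with hval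
      set upd : (𝒳 → M) → (𝒳 → M) := fun ω => Function.update ω ℓ (val ω) with hupd
      have hvalc : ∀ ω ω' : 𝒳 → M, val ω = val ω' := fun ω ω' => realize_const (c X) ω ω'
      set P : Set (𝒳 → M) := (Lit.eq (L := L) (Language.Term.var ℓ)
        (Language.Constants.term (c X))).sem (M := M) with hPdef
      set N : Set (𝒳 → M) := (Lit.ne (L := L) (Language.Term.var ℓ)
        (Language.Constants.term (c X))).sem (M := M) with hNdef
      set g := trGame ℓ c asn φ (dictUp ϑ X) with hg
      set Vs := ⋃₀ {Y : Set (𝒳 → M) | Y ⊆ (N ∩ Dᶜ)ᶜ ∩ (P ∩ (g.sem tr Ω Y)ᶜ)ᶜ} with hVs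
      set Estar := ⋃₀ {E : Set (𝒳 → M) | E ⊆ MuF.sem tr φ (modif Ω X E)} with hEstar
      set F := {ω : 𝒳 → M | upd ω ∈ Vs} with hF
      -- membership facts
      have hupdXP : ∀ ω : 𝒳 → M, upd ω ∈ P := by
        intro ω
        show (Function.update ω ℓ (val ω)) ℓ
            = (Language.Constants.term (c X)).realize (Function.update ω ℓ (val ω))
        rw [Function.update_self]
        exact hvalc ω _
      have hupdYN : ∀ (Y : V ⊕ V), Y ≠ X → ∀ ω : 𝒳 → M,
          Function.update ω ℓ ((Language.Constants.term (c Y) : L.Term 𝒳).realize ω) ∈ N := by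
        intro Y hYX ω
        show ¬ (Function.update ω ℓ ((Language.Constants.term (c Y) : L.Term 𝒳).realize ω)) ℓ
            = (Language.Constants.term (c X)).realize
                (Function.update ω ℓ ((Language.Constants.term (c Y)).realize ω))
        rw [Function.update_self]
        intro h
        exact hc Y X hYX ω (h.trans (realize_const (c X) _ ω))
      have hNnotP : ∀ ω : 𝒳 → M, ω ∈ N → ω ∉ P := fun ω h => h
      -- the H operator membership
      have hH : ∀ (Y : Set (𝒳 → M)) (ω : 𝒳 → M),
          ω ∈ (N ∩ Dᶜ)ᶜ ∩ (P ∩ (g.sem tr Ω Y)ᶜ)ᶜ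
            ↔ ((ω ∈ N → ω ∈ D) ∧ (ω ∈ P → ω ∈ g.sem tr Ω Y)) := by
        intro Y ω
        simp only [mem_inter_iff, mem_compl_iff, not_and, not_not]
      -- conversion of the demonic iteration to a greatest fixpoint
      have hsets : {Y : Set (𝒳 → M) |
            Yᶜ ∈ {Z : Set (𝒳 → M) | (N ∩ Dᶜ) ∪ (P ∩ (g.sem tr Ω Zᶜ)ᶜ) ⊆ Z}}
          = {Y : Set (𝒳 → M) | Y ⊆ (N ∩ Dᶜ)ᶜ ∩ (P ∩ (g.sem tr Ω Y)ᶜ)ᶜ} := by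
        ext Y
        simp only [mem_setOf_eq, compl_compl]
        constructor
        · intro h
          have h2 := compl_subset_compl.mpr h
          rwa [compl_compl, compl_union] at h2
        · intro h
          have h2 := compl_subset_compl.mpr h
          rwa [compl_inter, compl_compl, compl_compl] at h2
      have hVc : (⋂₀ {Z : Set (𝒳 → M) | (N ∩ Dᶜ) ∪ (P ∩ (g.sem tr Ω Zᶜ)ᶜ) ⊆ Z})ᶜ = Vs := by
        rw [compl_sInter', hsets, hVs]
      -- the RHS as a preimage of Vs
      have hRHS : (trGame ℓ c asn (MuF.nu X φ) ϑ).sem tr Ω D = F := by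
        have e1 : (trGame ℓ c asn (MuF.nu X φ) ϑ).sem tr Ω D
            = {ω | ∃ ν, tr (asn ℓ (Language.Constants.term (c X))) ω ν ∧
                ν ∈ (⋂₀ {Z : Set (𝒳 → M) |
                  (N ∩ Dᶜ) ∪ (P ∩ (g.sem tr Ω Zᶜ)ᶜ) ⊆ Z})ᶜ} := by
          rw [hg, hPdef, hNdef]
          simp only [trGame, GLG.cross, GLG.sem, GLF.sem, compl_compl]
        rw [e1, hVc, hF]
        ext ω
        simp only [mem_setOf_eq]
        constructor
        · rintro ⟨ν, h1, h2⟩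
          rw [hasn] at h1
          subst h1
          exact h2
        · intro h
          exact ⟨_, (hasn _ _ _ _).mpr rfl, h⟩
      -- properties of the ν-calculus fixpoint
      have hEindep : IndepSet ℓ Estar :=
        mu_sem_indep (tr := tr) (MuF.nu X φ) ⟨hbar, hWFφ⟩ hℓ hind Ω hΩ
      have hEpost : Estar ⊆ MuF.sem tr φ (modif Ω X Estar) :=
        (gfp_fix (H := fun E => MuF.sem tr φ (modif Ω X E))
          (fun A B h => mu_sem_mono X φ hbar Ω h)).ge
      -- the fixpoint property of Vs
      have hVfix : (N ∩ Dᶜ)ᶜ ∩ (P ∩ (g.sem tr Ω Vs)ᶜ)ᶜ = Vs :=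
        gfp_fix (H := fun Y => (N ∩ Dᶜ)ᶜ ∩ (P ∩ (g.sem tr Ω Y)ᶜ)ᶜ)
          (fun A B h => inter_subset_inter_right _ (compl_subset_compl.mpr
            (inter_subset_inter_right _ (compl_subset_compl.mpr (glg_sem_mono _ Ω h)))))
      -- instantiating the induction hypothesis
      have hother : ∀ (Y : V ⊕ V), Y ∈ φ.mentions → Y ≠ X → dictUp ϑ X (unbar Y) = true →
          Y ≠ bar X ∧ ϑ (unbar Y) = true ∧
          (∀ ω : 𝒳 → M,
            Function.update ω ℓ ((Language.Constants.term (c Y) : L.Term 𝒳).realize ω) ∈ D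
              ↔ ω ∈ barVal Ω Y) := by
        intro Y hYm hYX hYt
        have hYbar : Y ≠ bar X := fun h => hbar (h ▸ hYm)
        have hunbar : unbar Y ≠ unbar X := by
          intro h
          rcases unbar_eq_cases h with h | h
          · exact hYX h
          · exact hYbar h
        have hϑY : ϑ (unbar Y) = true := by
          rwa [dictUp, Function.update_of_ne hunbar] at hYt
        exact ⟨hYbar, hϑY, hstar Y (Or.inr hYm) hϑY⟩
      have hIH : ∀ (E DD : Set (𝒳 → M)), IndepSet ℓ E →
          (∀ ω : 𝒳 → M, upd ω ∈ DD ↔ ω ∈ E) →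
          (∀ (Y : V ⊕ V), Y ∈ φ.mentions → Y ≠ X → dictUp ϑ X (unbar Y) = true →
            ∀ ω : 𝒳 → M,
              Function.update ω ℓ ((Language.Constants.term (c Y) : L.Term 𝒳).realize ω) ∈ DD
                ↔ ω ∈ barVal Ω Y) →
          MuF.sem tr φ (modif Ω X E) = g.sem tr Ω DD := by
        intro E DD hEind hDX hDY
        have h1 := ih hWFφ hBOφ hℓ hind (modif Ω X E) (indepVal_modif hΩ hEind)
          (dictUp ϑ X) hcomp' DD ?_
        · rw [hg]
          exact h1.trans (trGame_sem_modif φ (dictUp ϑ X) X hϑ'X Ω E DD)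
        · intro Y hYm hYt ω
          by_cases hYX : Y = X
          · subst hYX
            rw [barVal_modif, if_pos rfl]
            exact hDX ω
          · obtain ⟨hYbar, _, _⟩ := hother Y hYm hYX hYt
            rw [barVal_modif, if_neg hYX, if_neg hYbar]
            exact hDY Y hYm hYX hYt ω
      -- the candidate postfixpoint Y*
      set Ys := (N ∩ D) ∪ (P ∩ Estar) with hYs
      have hYsX : ∀ ω : 𝒳 → M, upd ω ∈ Ys ↔ ω ∈ Estar := by
        intro ω
        rw [hYs]
        simp only [mem_union, mem_inter_iff]
        constructor
        · rintro (⟨h1, _⟩ | ⟨_, h2⟩)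
          · exact absurd (hupdXP ω) (hNnotP _ h1)
          · exact (hEindep (val ω) ω).mpr h2
        · intro h
          exact Or.inr ⟨hupdXP ω, (hEindep (val ω) ω).mp h⟩
      have hYsY : ∀ (Y : V ⊕ V), Y ∈ φ.mentions → Y ≠ X → dictUp ϑ X (unbar Y) = true →
          ∀ ω : 𝒳 → M,
            Function.update ω ℓ ((Language.Constants.term (c Y) : L.Term 𝒳).realize ω) ∈ Ys
              ↔ ω ∈ barVal Ω Y := by
        intro Y hYm hYX hYt ω
        obtain ⟨_, _, hD⟩ := hother Y hYm hYX hYt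
        have hN := hupdYN Y hYX ω
        rw [hYs]
        simp only [mem_union, mem_inter_iff]
        constructor
        · rintro (⟨_, h2⟩ | ⟨h1, _⟩)
          · exact (hD ω).mp h2
          · exact absurd h1 (hNnotP _ hN)
        · intro h
          exact Or.inl ⟨hN, (hD ω).mpr h⟩
      have hIH1 : MuF.sem tr φ (modif Ω X Estar) = g.sem tr Ω Ys :=
        hIH Estar Ys hEindep hYsX hYsY
      -- Y* is a postfixpoint of H
      have hYspost : Ys ⊆ (N ∩ Dᶜ)ᶜ ∩ (P ∩ (g.sem tr Ω Ys)ᶜ)ᶜ := by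
        intro ω hω
        rw [hH]
        rcases hω with ⟨hn, hd⟩ | ⟨hp, he⟩
        · exact ⟨fun _ => hd, fun hp => absurd hp (hNnotP _ hn)⟩
        · refine ⟨fun hn => absurd hp (hNnotP _ hn), fun _ => ?_⟩
          rw [← hIH1]
          exact hEpost he
      have hdir1 : Estar ⊆ F := by
        intro ω hω
        have h1 : upd ω ∈ Estar := (hEindep (val ω) ω).mp hω
        have h2 : upd ω ∈ Ys := Or.inr ⟨hupdXP ω, h1⟩
        exact le_gfp hYspost h2
      -- F is ℓ-independent
      have hFupd : ∀ (b : M) (ω : 𝒳 → M), upd (Function.update ω ℓ b) = upd ω := by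
        intro b ω
        show Function.update (Function.update ω ℓ b) ℓ (val (Function.update ω ℓ b))
            = Function.update ω ℓ (val ω)
        rw [Function.update_idem, hvalc (Function.update ω ℓ b) ω]
      have hFind : IndepSet ℓ F := by
        intro b ω
        rw [hF]
        simp only [mem_setOf_eq, hFupd]
      have hVX : ∀ ω : 𝒳 → M, upd ω ∈ Vs ↔ ω ∈ F := fun ω => Iff.rfl
      have hVY : ∀ (Y : V ⊕ V), Y ∈ φ.mentions → Y ≠ X → dictUp ϑ X (unbar Y) = true →
          ∀ ω : 𝒳 → M,
            Function.update ω ℓ ((Language.Constants.term (c Y) : L.Term 𝒳).realize ω) ∈ Vs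
              ↔ ω ∈ barVal Ω Y := by
        intro Y hYm hYX hYt ω
        obtain ⟨_, _, hD⟩ := hother Y hYm hYX hYt
        have hN := hupdYN Y hYX ω
        rw [← hVfix, hH]
        constructor
        · rintro ⟨h1, _⟩
          exact (hD ω).mp (h1 hN)
        · intro h
          exact ⟨fun _ => (hD ω).mpr h, fun hp => absurd hp (hNnotP _ hN)⟩
      have hIH2 : MuF.sem tr φ (modif Ω X F) = g.sem tr Ω Vs :=
        hIH F Vs hFind hVX hVY
      have hTind : IndepSet ℓ (MuF.sem tr φ (modif Ω X F)) :=
        mu_sem_indep φ hWFφ hℓ hind _ (indepVal_modif hΩ hFind)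
      have hFpost : F ⊆ MuF.sem tr φ (modif Ω X F) := by
        intro ω hω
        have h1 : upd ω ∈ (N ∩ Dᶜ)ᶜ ∩ (P ∩ (g.sem tr Ω Vs)ᶜ)ᶜ := by
          rw [hVfix]
          exact hω
        have h2 : upd ω ∈ g.sem tr Ω Vs := ((hH Vs (upd ω)).mp h1).2 (hupdXP ω)
        rw [← hIH2] at h2
        exact (hTind (val ω) ω).mpr h2
      have hdir2 : F ⊆ Estar := by
        rw [hEstar]
        exact subset_sUnion_of_mem hFpost
      rw [hRHS]
      show Estar = F
      exact Subset.antisymm hdir1 hdir2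

end Aux

set_option linter.unusedVariables false in
/-- Counterembedding: over an assignment structure, for a valuation `Ω`
independent of the control variable `ℓ`, a formula `φ`, a compatible dictionary `ϑ` and a
set `D` satisfying the condition (∗), the μ-calculus semantics of `φ` equals the game
semantics of `φ^ϑ` applied to `D`. -/
theorem counterembedding (L : Language) (𝒳 Act V : Type*)
    [DecidableEq 𝒳] [DecidableEq V]
    (M : Type*) [L.Structure M]
    (tr : Act → (𝒳 → M) → (𝒳 → M) → Prop)
    -- `L` has deterministic assignments and `M` is an assignment structure:
    (asn : 𝒳 → L.Term 𝒳 → Act)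
    (hasn : ∀ (x : 𝒳) (θ : L.Term 𝒳) (ω ν : 𝒳 → M),
      tr (asn x θ) ω ν ↔ ν = Function.update ω x (θ.realize ω))
    (c0 c1 : L.Constants)
    (h01 : ∀ ω : 𝒳 → M, (Language.Constants.term c0 : L.Term 𝒳).realize ω
        ≠ (Language.Constants.term c1 : L.Term 𝒳).realize ω)
    -- distinct constant symbols `c_X` with pairwise distinct interpretations:
    (c : V ⊕ V → L.Constants)
    (hc : ∀ (X Y : V ⊕ V), X ≠ Y → ∀ ω : 𝒳 → M,
      (Language.Constants.term (c X) : L.Term 𝒳).realize ω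
        ≠ (Language.Constants.term (c Y) : L.Term 𝒳).realize ω)
    -- the control variable `ℓ`:
    (ℓ : 𝒳)
    (Ω : V → Set (𝒳 → M)) (hΩ : IndepVal ℓ Ω)
    (φ : MuF L 𝒳 Act V) (hWF : φ.WF) (hBO : φ.BoundOnce)
    (hℓ : ℓ ∉ φ.ovars)
    (hind : ∀ a ∈ φ.acts, IndepAct tr ℓ a)
    (ϑ : V → Bool) (hcomp : Compat ϑ φ)
    (D : Set (𝒳 → M))
    -- the condition (∗):
    (hstar : ∀ X : V ⊕ V, ϑ (unbar X) = true →
      (GLG.act (asn ℓ (Language.Constants.term (c X))) : GLG L 𝒳 Act V).sem tr Ω D = barVal Ω X) :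
    φ.sem tr Ω = (trGame ℓ c asn φ ϑ).sem tr Ω D := by
  apply counter_aux hasn hc φ hWF hBO hℓ hind Ω hΩ ϑ hcomp D
  intro X _ hX ω
  have hs := hstar X hX
  have h2 : ω ∈ (GLG.act (asn ℓ (Language.Constants.term (c X))) : GLG L 𝒳 Act V).sem tr Ω D
      ↔ Function.update ω ℓ ((Language.Constants.term (c X) : L.Term 𝒳).realize ω) ∈ D := by
    simp only [GLG.sem, mem_setOf_eq]
    constructor
    · rintro ⟨ν, h1, h2⟩
      rw [hasn] at h1
      subst h1
      exact h2
    · intro h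
      exact ⟨_, (hasn _ _ _ _).mpr rfl, h⟩
  rw [← hs]
  exact h2.symm


end GLMu
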